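/- arXiv:1604.05533 — 6 statements merged into one kernel-verified Lean document; each statement's English description precedes it below -/
import Mathlib

section
/- Fix u ∈ ℂ and y ∈ ℂ with Re y > 0. The function z ↦ Φ(z,u,y) is complex differentiable on the open unit disc, and for every z with |z| < 1 one has Φ(z,u−1,y) = y·Φ(z,u,y) + z·(∂Φ/∂z)(z,u,y). -/
open Complex Real

lemma ne_zero_aux {y : ℂ} (hy : 0 < y.re) (n : ℕ) : y + (n : ℂ) ≠ 0 := by
  intro h
  have h2 : (y + (n : ℂ)).re = 0 := by rw [h]; simp
  simp only [Complex.add_re, Complex.natCast_re] at h2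
  have : (0:ℝ) < y.re + (n : ℝ) := by positivity
  linarith

lemma norm_aux {y : ℂ} (hy : 0 < y.re) (u : ℂ) :
    ∃ C : ℝ, 0 < C ∧ ∀ n : ℕ,
      ‖(1 : ℂ) / (y + (n : ℂ)) ^ u‖ ≤ C * ((n : ℝ) + 1) ^ (⌈|u.re|⌉₊) := by
  set k := ⌈|u.re|⌉₊ with hk
  refine ⟨Real.exp (π * |u.im|) * (y.re ^ (-u.re) + (‖y‖ + 1) ^ (-u.re)),
    by positivity, fun n => ?_⟩
  have hne := ne_zero_aux hy n
  have habs : 0 < ‖y + (n : ℂ)‖ := by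
    simpa [norm_pos_iff] using hne
  have hre : y.re ≤ ‖y + (n:ℂ)‖ := by
    calc y.re ≤ y.re + (n:ℝ) := le_add_of_nonneg_right n.cast_nonneg
    _ = (y + (n:ℂ)).re := by simp
    _ ≤ ‖y + (n:ℂ)‖ := Complex.re_le_norm _
  rw [norm_div, norm_one, Complex.norm_cpow_of_ne_zero hne,
    one_div, inv_div]
  have h1 : Real.exp ((y + (n:ℂ)).arg * u.im) ≤ Real.exp (π * |u.im|) := by
    apply Real.exp_le_exp.mpr
    calc (y + (n:ℂ)).arg * u.im ≤ |(y + (n:ℂ)).arg * u.im| := le_abs_self _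
    _ = |(y + (n:ℂ)).arg| * |u.im| := abs_mul _ _
    _ ≤ π * |u.im| :=
        mul_le_mul_of_nonneg_right (Complex.abs_arg_le_pi _) (abs_nonneg _)
  have hn1 : (1:ℝ) ≤ (n:ℝ) + 1 := le_add_of_nonneg_left n.cast_nonneg
  have hpk : (1:ℝ) ≤ ((n:ℝ) + 1) ^ k := one_le_pow₀ hn1
  have h2 : ‖y + (n:ℂ)‖ ^ (-u.re) ≤
      (y.re ^ (-u.re) + (‖y‖ + 1) ^ (-u.re)) * ((n : ℝ) + 1) ^ k := by
    rcases le_or_gt 0 u.re with hu | hu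
    · have hb : ‖y + (n:ℂ)‖ ^ (-u.re) ≤ y.re ^ (-u.re) :=
        Real.rpow_le_rpow_of_nonpos hy hre (by linarith)
      have hnn : (0:ℝ) ≤ (‖y‖ + 1) ^ (-u.re) := by positivity
      nlinarith [Real.rpow_nonneg hy.le (-u.re)]
    · have hb : ‖y + (n:ℂ)‖ ≤ (‖y‖ + 1) * ((n:ℝ) + 1) := by
        calc ‖y + (n:ℂ)‖ ≤ ‖y‖ + ‖(n:ℂ)‖ :=
            norm_add_le _ _
        _ = ‖y‖ + (n:ℝ) := by simp
        _ ≤ (‖y‖ + 1) * ((n:ℝ) + 1) := by nlinarith [norm_nonneg y]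
      have ht : (0:ℝ) ≤ -u.re := by linarith
      have h3 : ‖y + (n:ℂ)‖ ^ (-u.re) ≤
          ((‖y‖ + 1) * ((n:ℝ) + 1)) ^ (-u.re) :=
        Real.rpow_le_rpow habs.le hb ht
      have h4 : ((‖y‖ + 1) * ((n:ℝ) + 1)) ^ (-u.re)
          = (‖y‖ + 1) ^ (-u.re) * ((n:ℝ) + 1) ^ (-u.re) :=
        Real.mul_rpow (by positivity) (by positivity)
      have h5 : ((n:ℝ) + 1) ^ (-u.re) ≤ ((n:ℝ) + 1) ^ (k:ℝ) := by
        apply Real.rpow_le_rpow_of_exponent_le hn1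
        have : -u.re = |u.re| := by rw [abs_of_neg hu]
        rw [this]
        exact Nat.le_ceil _
      rw [Real.rpow_natCast] at h5
      have hnn : (0:ℝ) ≤ (‖y‖ + 1) ^ (-u.re) := by positivity
      have hnn2 : (0:ℝ) ≤ y.re ^ (-u.re) := by positivity
      calc ‖y + (n:ℂ)‖ ^ (-u.re)
          ≤ (‖y‖ + 1) ^ (-u.re) * ((n:ℝ) + 1) ^ k := by
            rw [h4] at h3; exact h3.trans (by nlinarith)
      _ ≤ _ := by nlinarith
  calc Real.exp ((y + (n:ℂ)).arg * u.im) / ‖y + (n:ℂ)‖ ^ u.re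
      = Real.exp ((y + (n:ℂ)).arg * u.im) * ‖y + (n:ℂ)‖ ^ (-u.re) := by
        rw [Real.rpow_neg habs.le, div_eq_mul_inv]
  _ ≤ Real.exp (π * |u.im|) *
      ((y.re ^ (-u.re) + (‖y‖ + 1) ^ (-u.re)) * ((n : ℝ) + 1) ^ k) := by
        apply mul_le_mul h1 h2 (by positivity) (by positivity)
  _ = _ := by ring

lemma summable_aux (k : ℕ) {r : ℝ} (h0 : 0 ≤ r) (h1 : r < 1) :
    Summable (fun n : ℕ => ((n : ℝ) + 1) ^ k * r ^ n) := by
  rcases eq_or_lt_of_le h0 with rfl | hr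
  · apply summable_of_ne_finset_zero (s := {0})
    intro n hn
    simp only [Finset.mem_singleton] at hn
    simp [zero_pow hn]
  · have hg : Summable (fun n : ℕ => (n : ℝ) ^ k * r ^ n) :=
      summable_pow_mul_geometric_of_norm_lt_one k
        (by rwa [Real.norm_eq_abs, abs_of_pos hr])
    have hs : Summable (fun n : ℕ => ((n + 1 : ℕ) : ℝ) ^ k * r ^ (n + 1)) :=
      hg.comp_injective Nat.succ_injective
    have := hs.mul_left r⁻¹
    refine this.congr fun n => ?_
    push_cast
    field_simp
    ring

/-- The Lerch transcendent `Φ(z,u,y) = Σ_{n=0}^∞ z^n/(y+n)^u`,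
with `(y+n)^u` the principal complex power. -/
noncomputable def Phi (z u y : ℂ) : ℂ := ∑' n : ℕ, z ^ n / (y + n) ^ u

theorem stmt1 (u y : ℂ) (hy : 0 < y.re) :
    ∀ z : ℂ, ‖z‖ < 1 →
      DifferentiableAt ℂ (fun w : ℂ => Phi w u y) z ∧
      Phi z (u - 1) y = y * Phi z u y + z * deriv (fun w : ℂ => Phi w u y) z := by
  obtain ⟨C, hC, hb⟩ := norm_aux hy u
  set k := ⌈|u.re|⌉₊ with hk
  intro z hz
  set r : ℝ := (‖z‖ + 1) / 2 with hr
  have hr0 : 0 < r := by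
    have := norm_nonneg z
    rw [hr]; linarith
  have hzr : ‖z‖ < r := by rw [hr]; linarith
  have hr1 : r < 1 := by rw [hr]; linarith
  have hterm : ∀ (n m : ℕ) (w : ℂ),
      ‖w ^ m / (y + n) ^ u‖ = ‖w‖ ^ m * ‖(1:ℂ)/(y + n)^u‖ := by
    intro n m w
    rw [div_eq_mul_one_div, norm_mul, norm_pow]
  -- summability of the series at z
  have hSz : Summable (fun n : ℕ => z ^ n / (y + n) ^ u) := by
    apply Summable.of_norm_bounded ((summable_aux k (norm_nonneg z) hz).mul_left C)
    intro n
    rw [hterm n n]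
    calc ‖z‖ ^ n * ‖(1:ℂ)/(y+(n:ℂ))^u‖
        ≤ ‖z‖ ^ n * (C * ((n:ℝ)+1)^k) :=
          mul_le_mul_of_nonneg_left (hb n) (by positivity)
    _ = C * (((n:ℝ)+1)^k * ‖z‖ ^ n) := by ring
  -- summability of the weighted series at z
  have hS2 : Summable (fun n : ℕ => (n:ℂ) * z ^ n / (y + n) ^ u) := by
    apply Summable.of_norm_bounded
      ((summable_aux (k+1) (norm_nonneg z) hz).mul_left C)
    intro n
    rw [mul_div_assoc, norm_mul, hterm n n, Complex.norm_natCast]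
    have hbn := hb n
    have h1 : (n:ℝ) * (‖z‖ ^ n * ‖(1:ℂ)/(y+(n:ℂ))^u‖)
        ≤ (n:ℝ) * (‖z‖ ^ n * (C * ((n:ℝ)+1)^k)) := by
      apply mul_le_mul_of_nonneg_left _ n.cast_nonneg
      exact mul_le_mul_of_nonneg_left hbn (by positivity)
    refine h1.trans ?_
    have h2 : (n:ℝ) * ((n:ℝ)+1)^k ≤ ((n:ℝ)+1)^(k+1) := by
      rw [pow_succ]
      have : (0:ℝ) ≤ ((n:ℝ)+1)^k := by positivity
      nlinarith [n.cast_nonneg (α := ℝ)]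
    have h3 : (0:ℝ) ≤ ‖z‖ ^ n := by positivity
    calc (n:ℝ) * (‖z‖ ^ n * (C * ((n:ℝ)+1)^k))
        = ((n:ℝ) * ((n:ℝ)+1)^k) * (C * ‖z‖ ^ n) := by ring
    _ ≤ ((n:ℝ)+1)^(k+1) * (C * ‖z‖ ^ n) := by
        apply mul_le_mul_of_nonneg_right h2 (by positivity)
    _ = C * (((n:ℝ)+1)^(k+1) * ‖z‖ ^ n) := by ring
  -- termwise derivative with uniform bound on the ball of radius r
  have hd : HasDerivAt (fun w : ℂ => Phi w u y)
      (∑' n : ℕ, (n:ℂ) * z ^ (n-1) / (y + n) ^ u) z := by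
    have := hasDerivAt_tsum_of_isPreconnected
      (u := fun n : ℕ => (C/r) * ((n:ℝ)+1)^(k+1) * r^n)
      (g := fun (n : ℕ) (w : ℂ) => w ^ n / (y + n) ^ u)
      (g' := fun (n : ℕ) (w : ℂ) => (n:ℂ) * w ^ (n-1) / (y + n) ^ u)
      (t := Metric.ball (0:ℂ) r) (y₀ := 0) (y := z)
      ?_ Metric.isOpen_ball (convex_ball 0 r).isPreconnected ?_ ?_
      (Metric.mem_ball_self hr0) ?_ ?_
    · exact this
    · have := (summable_aux (k+1) hr0.le hr1).mul_left (C/r)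
      exact this.congr fun n => by ring
    · intro n w _
      exact (hasDerivAt_pow n w).div_const _
    · intro n w hw
      have hwr : ‖w‖ < r := by
        simpa [Complex.dist_eq] using hw
      show ‖(n:ℂ) * w ^ (n-1) / (y + (n:ℂ)) ^ u‖ ≤ C / r * ((n:ℝ)+1)^(k+1) * r^n
      rw [mul_div_assoc, norm_mul, hterm n (n-1), Complex.norm_natCast]
      match n with
      | 0 => simp; positivity
      | (m+1) =>
        have hwm : ‖w‖ ^ m ≤ r ^ m :=
          pow_le_pow_left₀ (norm_nonneg w) hwr.le m
        have hb' := hb (m+1)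
        have hnn : (0:ℝ) ≤ ‖(1:ℂ)/(y+((m:ℕ)+1:ℂ))^u‖ := norm_nonneg _
        simp only [Nat.add_sub_cancel]
        push_cast
        have step1 : ((m:ℝ)+1) * (‖w‖ ^ m * ‖(1:ℂ)/(y+((m:ℂ)+1))^u‖)
            ≤ ((m:ℝ)+1) * (r ^ m * (C * (((m:ℝ)+1)+1)^k)) := by
          apply mul_le_mul_of_nonneg_left _ (by positivity)
          apply mul_le_mul hwm _ (norm_nonneg _) (by positivity)
          have := hb (m+1)
          push_cast at this
          exact this
        refine le_trans step1 ?_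
        have h2 : ((m:ℝ)+1) * (((m:ℝ)+1)+1)^k ≤ (((m:ℝ)+1)+1)^(k+1) := by
          rw [pow_succ]
          have : (0:ℝ) ≤ (((m:ℝ)+1)+1)^k := by positivity
          nlinarith [m.cast_nonneg (α := ℝ)]
        have hrm : r ^ (m+1) = r * r ^ m := by rw [pow_succ]; ring
        calc ((m:ℝ)+1) * (r ^ m * (C * (((m:ℝ)+1)+1)^k))
            = (((m:ℝ)+1) * (((m:ℝ)+1)+1)^k) * (C * r ^ m) := by ring
        _ ≤ (((m:ℝ)+1)+1)^(k+1) * (C * r ^ m) := by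
            apply mul_le_mul_of_nonneg_right h2 (by positivity)
        _ = C / r * (((m:ℝ)+1)+1) ^ (k+1) * r ^ (m+1) := by
            rw [hrm]; field_simp
    · apply summable_of_ne_finset_zero (s := ({0} : Finset ℕ))
      intro n hn
      simp only [Finset.mem_singleton] at hn
      simp [zero_pow hn]
    · simpa [Complex.dist_eq] using hzr
  refine ⟨hd.differentiableAt, ?_⟩
  rw [hd.deriv]
  have hceq : ∀ n : ℕ, (y + (n:ℂ)) ^ u ≠ 0 := by
    intro n h
    rw [Complex.cpow_eq_zero_iff] at h
    exact ne_zero_aux hy n h.1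
  have hterm_eq : ∀ n : ℕ, z ^ n / (y + (n:ℂ)) ^ (u-1)
      = y * (z ^ n / (y + (n:ℂ)) ^ u) + (n:ℂ) * z ^ n / (y + (n:ℂ)) ^ u := by
    intro n
    rw [Complex.cpow_sub _ _ (ne_zero_aux hy n), Complex.cpow_one]
    rw [div_div_eq_mul_div]
    field_simp
  have hzder : z * ∑' n : ℕ, (n:ℂ) * z ^ (n-1) / (y + (n:ℂ)) ^ u
      = ∑' n : ℕ, (n:ℂ) * z ^ n / (y + (n:ℂ)) ^ u := by
    rw [← tsum_mul_left]
    apply tsum_congr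
    intro n
    match n with
    | 0 => simp
    | (m+1) =>
      simp only [Nat.add_sub_cancel]
      rw [pow_succ]
      ring
  calc Phi z (u-1) y
      = ∑' n : ℕ, (y * (z ^ n / (y + (n:ℂ)) ^ u) + (n:ℂ) * z ^ n / (y + (n:ℂ)) ^ u) :=
        tsum_congr hterm_eq
  _ = y * Phi z u y + ∑' n : ℕ, (n:ℂ) * z ^ n / (y + (n:ℂ)) ^ u := by
      rw [Summable.tsum_add (hSz.mul_left y) hS2, tsum_mul_left]
      rfl
  _ = _ := by rw [← hzder]
end

section
/- Let q ∈ [0,1], let r₀ > 0, and let a, b, c : [0, r₀] → ℝ be continuous functions such that for all U ∈ [0, r₀]: a(U) > 0, c(U) > 0 and −√(a(U)c(U)) ≤ b(U) < √(a(U)c(U)). Then there exist M > 0 and δ > 0 such that for all (U,Y) ∈ [0,δ]² with U^{2−q}·Y^q ≠ 0, one has (a(U)·Y² − 2·b(U)·U·Y + c(U)·U²)/(U^{2−q}·Y^q) ≥ M. -/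
open Set

theorem stmt5 (q r₀ : ℝ) (hq0 : 0 ≤ q) (hq1 : q ≤ 1) (hr : 0 < r₀)
    (a b c : ℝ → ℝ)
    (ha : ContinuousOn a (Icc 0 r₀)) (hb : ContinuousOn b (Icc 0 r₀))
    (hc : ContinuousOn c (Icc 0 r₀))
    (hapos : ∀ U ∈ Icc (0 : ℝ) r₀, 0 < a U)
    (hcpos : ∀ U ∈ Icc (0 : ℝ) r₀, 0 < c U)
    (hblb : ∀ U ∈ Icc (0 : ℝ) r₀, -Real.sqrt (a U * c U) ≤ b U)
    (hbub : ∀ U ∈ Icc (0 : ℝ) r₀, b U < Real.sqrt (a U * c U)) :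
    ∃ M > (0 : ℝ), ∃ δ > (0 : ℝ), ∀ U Y : ℝ, U ∈ Icc 0 δ → Y ∈ Icc 0 δ →
      U ^ (2 - q) * Y ^ q ≠ 0 →
      M ≤ (a U * Y ^ 2 - 2 * b U * U * Y + c U * U ^ 2) / (U ^ (2 - q) * Y ^ q) := by
  classical
  set S : Set (ℝ × ℝ) := ({1} ×ˢ Icc 0 1) ∪ (Icc 0 1 ×ˢ {1}) with hSdef
  have hScomp : IsCompact S :=
    (isCompact_singleton.prod isCompact_Icc).union (isCompact_Icc.prod isCompact_singleton)
  set K : Set (ℝ × ℝ × ℝ) := (Icc 0 r₀) ×ˢ S with hKdef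
  have hKcomp : IsCompact K := isCompact_Icc.prod hScomp
  have hKne : K.Nonempty :=
    ⟨(0, 1, 1), ⟨left_mem_Icc.2 hr.le, Or.inl ⟨rfl, ⟨zero_le_one, le_refl 1⟩⟩⟩⟩
  set F : ℝ × ℝ × ℝ → ℝ :=
    fun p => a p.1 * p.2.2 ^ 2 - 2 * b p.1 * p.2.1 * p.2.2 + c p.1 * p.2.1 ^ 2 with hFdef
  have hmaps : ∀ p ∈ K, p.1 ∈ Icc (0:ℝ) r₀ := fun p hp => hp.1
  have hF : ContinuousOn F K := by
    apply ContinuousOn.add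
    apply ContinuousOn.sub
    · exact (ha.comp continuousOn_fst hmaps).mul
        ((continuous_snd.comp continuous_snd).continuousOn.pow 2)
    · exact (((continuousOn_const.mul (hb.comp continuousOn_fst hmaps)).mul
        (continuous_fst.comp continuous_snd).continuousOn).mul
        (continuous_snd.comp continuous_snd).continuousOn)
    · exact (hc.comp continuousOn_fst hmaps).mul
        ((continuous_fst.comp continuous_snd).continuousOn.pow 2)
  obtain ⟨⟨x, u, y⟩, hpK, hmin⟩ := hKcomp.exists_isMinOn hKne hF
  set ε := F (x, u, y) with hεdef
  obtain ⟨hx, hS⟩ := hpK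
  have hax := hapos x hx
  have hcx := hcpos x hx
  have hbx := hbub x hx
  have hsa2 : Real.sqrt (a x) ^ 2 = a x := Real.sq_sqrt hax.le
  have hsc2 : Real.sqrt (c x) ^ 2 = c x := Real.sq_sqrt hcx.le
  have hsasc : Real.sqrt (a x) * Real.sqrt (c x) = Real.sqrt (a x * c x) :=
    (Real.sqrt_mul hax.le _).symm
  have hεpos : 0 < ε := by
    rw [hεdef, hFdef]
    simp only
    rcases hS with ⟨hu1, hy0, hy1⟩ | ⟨⟨hu0, hu1⟩, hy1⟩
    · simp only [mem_singleton_iff] at hu1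
      subst hu1
      rcases eq_or_lt_of_le hy0 with h0 | h0
      · obtain rfl : (0:ℝ) = y := h0
        nlinarith [hcpos x hx]
      · nlinarith [sq_nonneg (Real.sqrt (a x) * y - Real.sqrt (c x)),
          mul_pos (sub_pos.2 (hsasc ▸ hbx)) h0]
    · simp only [mem_singleton_iff] at hy1
      subst hy1
      rcases eq_or_lt_of_le hu0 with h0 | h0
      · obtain rfl : (0:ℝ) = u := h0
        nlinarith [hapos x hx]
      · nlinarith [sq_nonneg (Real.sqrt (a x) - Real.sqrt (c x) * u),
          mul_pos (sub_pos.2 (hsasc ▸ hbx)) h0]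
  refine ⟨ε, hεpos, r₀, hr, ?_⟩
  intro U Y hU hY hD
  have h2q : (0:ℝ) < 2 - q := by linarith
  have hU0 : 0 < U := by
    rcases eq_or_lt_of_le hU.1 with h | h
    · exfalso
      apply hD
      rw [← h, Real.zero_rpow (ne_of_gt h2q), zero_mul]
    · exact h
  have hDpos : 0 < U ^ (2 - q) * Y ^ q :=
    lt_of_le_of_ne (mul_nonneg (Real.rpow_nonneg hU.1 _) (Real.rpow_nonneg hY.1 _))
      (Ne.symm hD)
  set m := max U Y with hmdef
  have hm : 0 < m := lt_of_lt_of_le hU0 (le_max_left _ _)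
  have hDle : U ^ (2 - q) * Y ^ q ≤ m ^ 2 := by
    have h1 : U ^ (2 - q) ≤ m ^ (2 - q) :=
      Real.rpow_le_rpow hU.1 (le_max_left _ _) h2q.le
    have h2 : Y ^ q ≤ m ^ q := Real.rpow_le_rpow hY.1 (le_max_right _ _) hq0
    calc U ^ (2 - q) * Y ^ q ≤ m ^ (2 - q) * m ^ q :=
          mul_le_mul h1 h2 (Real.rpow_nonneg hY.1 _) (Real.rpow_nonneg hm.le _)
      _ = m ^ ((2 - q) + q) := (Real.rpow_add hm _ _).symm
      _ = m ^ (2:ℝ) := by ring_nf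
      _ = m ^ 2 := Real.rpow_two m
  have hmem : (U, U / m, Y / m) ∈ K := by
    refine ⟨hU, ?_⟩
    rcases le_total Y U with h | h
    · have hmU : m = U := max_eq_left h
      exact Or.inl ⟨by simp [hmU, div_self hU0.ne'],
        ⟨div_nonneg hY.1 hm.le, (div_le_one hm).2 (le_max_right _ _)⟩⟩
    · have hmY : m = Y := max_eq_right h
      exact Or.inr ⟨⟨div_nonneg hU.1 hm.le, (div_le_one hm).2 (le_max_left _ _)⟩,
        by simp [hmY, div_self (lt_of_lt_of_le hU0 h).ne']⟩
  have hk := isMinOn_iff.mp hmin _ hmem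
  have hQ : ε * m ^ 2 ≤ a U * Y ^ 2 - 2 * b U * U * Y + c U * U ^ 2 := by
    have h' := mul_le_mul_of_nonneg_right hk (sq_nonneg m)
    calc ε * m ^ 2 ≤ F (U, U / m, Y / m) * m ^ 2 := h'
      _ = a U * Y ^ 2 - 2 * b U * U * Y + c U * U ^ 2 := by
          rw [hFdef]; field_simp
  rw [le_div_iff₀ hDpos]
  calc ε * (U ^ (2 - q) * Y ^ q) ≤ ε * m ^ 2 :=
        mul_le_mul_of_nonneg_left hDle hεpos.le
    _ ≤ _ := hQ
end

section
/- Let q ∈ [0,2], let r₀ > 0, and let a, b, c : [0, r₀] → ℝ be continuous functions such that: a(U) > 0 and c(U) > 0 for all U ∈ [0, r₀]; −√(a(U)c(U)) ≤ b(U) < √(a(U)c(U)) for all U ∈ (0, r₀]; b(0) = √(a(0)c(0)); and the limit K = lim_{U→0⁺} (a(U)c(U) − b(U)²)/U² exists and satisfies K > 0. Then there exist M > 0 and δ > 0 such that for all (U,Y) ∈ [0,δ]² with U^{4−q}·Y^q ≠ 0, one has (a(U)·Y² − 2·b(U)·U·Y + c(U)·U²)/(U^{4−q}·Y^q) ≥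 M. -/
open Set Filter

private lemma extract_ev (s : Set ℝ) (p : ℝ → Prop) (h : ∀ᶠ x in nhdsWithin 0 s, p x) :
    ∃ ε > (0:ℝ), ∀ x ∈ s, |x| < ε → p x := by
  rw [eventually_nhdsWithin_iff, Metric.eventually_nhds_iff] at h
  obtain ⟨ε, hε, h⟩ := h
  exact ⟨ε, hε, fun x hx hxε => h (by simpa [Real.dist_eq] using hxε) hx⟩

set_option maxHeartbeats 1000000 in
theorem stmt6 (q r₀ K : ℝ) (hq0 : 0 ≤ q) (hq2 : q ≤ 2) (hr : 0 < r₀)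
    (a b c : ℝ → ℝ)
    (ha : ContinuousOn a (Icc 0 r₀)) (hb : ContinuousOn b (Icc 0 r₀))
    (hc : ContinuousOn c (Icc 0 r₀))
    (hapos : ∀ U ∈ Icc (0 : ℝ) r₀, 0 < a U)
    (hcpos : ∀ U ∈ Icc (0 : ℝ) r₀, 0 < c U)
    (hblb : ∀ U ∈ Ioc (0 : ℝ) r₀, -Real.sqrt (a U * c U) ≤ b U)
    (hbub : ∀ U ∈ Ioc (0 : ℝ) r₀, b U < Real.sqrt (a U * c U))
    (hb0 : b 0 = Real.sqrt (a 0 * c 0))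
    (hK : Filter.Tendsto (fun U : ℝ => (a U * c U - (b U) ^ 2) / U ^ 2)
      (nhdsWithin 0 (Ioi 0)) (nhds K))
    (hKpos : 0 < K) :
    ∃ M > (0 : ℝ), ∃ δ > (0 : ℝ), ∀ U Y : ℝ, U ∈ Icc 0 δ → Y ∈ Icc 0 δ →
      U ^ (4 - q) * Y ^ q ≠ 0 →
      M ≤ (a U * Y ^ 2 - 2 * b U * U * Y + c U * U ^ 2) / (U ^ (4 - q) * Y ^ q) := by
  have h0mem : (0:ℝ) ∈ Icc (0:ℝ) r₀ := ⟨le_refl _, hr.le⟩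
  have ha0 : 0 < a 0 := hapos 0 h0mem
  have hc0 : 0 < c 0 := hcpos 0 h0mem
  have hb0pos : 0 < b 0 := by rw [hb0]; exact Real.sqrt_pos.mpr (mul_pos ha0 hc0)
  set L : ℝ := b 0 / a 0 with hLdef
  have hLpos : 0 < L := div_pos hb0pos ha0
  have hLa : L * a 0 = b 0 := div_mul_cancel₀ _ (ne_of_gt ha0)
  -- continuity of a at 0
  have hEa : ∀ᶠ U in nhdsWithin 0 (Icc 0 r₀), dist (a U) (a 0) < a 0 / 4 :=
    (ha 0 h0mem) (Metric.ball_mem_nhds _ (by positivity))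
  have hEb : ∀ᶠ U in nhdsWithin 0 (Icc 0 r₀), dist (b U) (b 0) < b 0 / 2 :=
    (hb 0 h0mem) (Metric.ball_mem_nhds _ (by positivity))
  have hEK : ∀ᶠ U in nhdsWithin 0 (Ioi 0),
      K/2 < (a U * c U - (b U)^2) / U^2 :=
    hK.eventually_const_lt (by linarith)
  obtain ⟨ε₁, hε₁, h1⟩ := extract_ev _ _ hEa
  obtain ⟨ε₂, hε₂, h2⟩ := extract_ev _ _ hEb
  obtain ⟨ε₃, hε₃, h3⟩ := extract_ev _ _ hEK
  set δ : ℝ := min (min (ε₁/2) (ε₂/2)) (min (ε₃/2) (min r₀ 1)) with hδdef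
  have hδpos : 0 < δ := by positivity
  have hδr : δ ≤ r₀ := le_trans (min_le_right _ _) (le_trans (min_le_right _ _) (min_le_left _ _))
  have hδ1 : δ ≤ 1 := le_trans (min_le_right _ _) (le_trans (min_le_right _ _) (min_le_right _ _))
  have hδε₁ : δ < ε₁ := lt_of_le_of_lt (le_trans (min_le_left _ _) (min_le_left _ _)) (by linarith)
  have hδε₂ : δ < ε₂ := lt_of_le_of_lt (le_trans (min_le_left _ _) (min_le_right _ _)) (by linarith)
  have hδε₃ : δ < ε₃ := lt_of_le_of_lt (le_trans (min_le_right _ _) (min_le_left _ _)) (by linarith)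
  set P1 : ℝ := (3*L) ^ q with hP1
  set P2 : ℝ := (3*L) ^ (4-q) with hP2
  have hP1pos : 0 < P1 := Real.rpow_pos_of_pos (by linarith) _
  have hP2pos : 0 < P2 := Real.rpow_pos_of_pos (by linarith) _
  set M₁ : ℝ := (2*K/(5*a 0)) / P1 with hM1
  set M₂ : ℝ := (a 0/20) * P2 with hM2
  have hM1pos : 0 < M₁ := by positivity
  have hM2pos : 0 < M₂ := by positivity
  clear_value M₁ M₂
  refine ⟨min M₁ M₂, lt_min hM1pos hM2pos, δ, hδpos, ?_⟩
  intro U Y hU hY hD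
  -- U > 0
  have hU0 : 0 < U := by
    rcases lt_or_eq_of_le hU.1 with h | h
    · exact h
    · exfalso; apply hD
      rw [← h, Real.zero_rpow (by intro hh; linarith : 4 - q ≠ 0), zero_mul]
  have hUr : U ∈ Icc (0:ℝ) r₀ := ⟨hU.1, le_trans hU.2 hδr⟩
  have hUabs : |U| < ε₁ ∧ |U| < ε₂ ∧ |U| < ε₃ := by
    rw [abs_of_nonneg hU.1]
    exact ⟨lt_of_le_of_lt hU.2 hδε₁, lt_of_le_of_lt hU.2 hδε₂, lt_of_le_of_lt hU.2 hδε₃⟩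
  have haU := h1 U hUr hUabs.1
  have hbU := h2 U hUr hUabs.2.1
  have hKU := h3 U hU0 hUabs.2.2
  rw [Real.dist_eq, abs_lt] at haU hbU
  have haUl : 3 * a 0 / 4 < a U := by linarith [haU.1]
  have haUu : a U < 5 * a 0 / 4 := by linarith [haU.2]
  have hbUu : b U < 3 * b 0 / 2 := by linarith [hbU.2]
  have hdisc : K/2 * U^2 ≤ a U * c U - (b U)^2 := by
    have := hKU
    rw [lt_div_iff₀ (by positivity : (0:ℝ) < U^2)] at this
    linarith
  have hYnn : 0 ≤ Y := hY.1
  have hY1 : Y ≤ 1 := le_trans hY.2 hδ1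
  have hU1 : U ≤ 1 := le_trans hU.2 hδ1
  -- denominator positive
  have hUp : 0 < U ^ (4-q) := Real.rpow_pos_of_pos hU0 _
  have hYq : 0 ≤ Y ^ q := Real.rpow_nonneg hYnn _
  have hDpos : 0 < U ^ (4-q) * Y ^ q := by
    rcases lt_or_eq_of_le hYq with h | h
    · exact mul_pos hUp h
    · exfalso; apply hD; rw [← h, mul_zero]
  rw [le_div_iff₀ hDpos]
  set Q : ℝ := a U * Y ^ 2 - 2 * b U * U * Y + c U * U ^ 2 with hQdef
  clear_value Q
  have hQkey : a U * Q = (a U * Y - b U * U)^2 + (a U * c U - (b U)^2) * U^2 := by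
    rw [hQdef]; ring
  have hdisc0 : 0 ≤ a U * c U - (b U)^2 := by
    have := mul_nonneg (le_of_lt (half_pos hKpos)) (sq_nonneg U)
    linarith
  have hdiscnn : 0 ≤ (a U * c U - (b U)^2) * U^2 := mul_nonneg hdisc0 (sq_nonneg U)
  have haUpos : 0 < a U := by linarith
  have hQnn : 0 ≤ Q := by
    have haQnn : 0 ≤ a U * Q := by
      rw [hQkey]; exact add_nonneg (sq_nonneg _) hdiscnn
    exact nonneg_of_mul_nonneg_right haQnn haUpos
  rcases le_or_gt Y (3*L*U) with hcase | hcase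
  · -- Case 1 : Y ≤ 3 L U
    have hQ4 : K/2 * U^4 ≤ a U * Q := by
      have hd2 := mul_le_mul_of_nonneg_right hdisc (sq_nonneg U)
      have h4 : U^4 = U^2 * U^2 := by ring
      rw [hQkey, h4]
      have := sq_nonneg (a U * Y - b U * U)
      linarith
    have hQlb : 2*K/(5*a 0) * U^4 ≤ Q := by
      have h6 : K/2 * U^4 ≤ (5*a 0/4) * Q :=
        le_trans hQ4 (mul_le_mul_of_nonneg_right (le_of_lt haUu) hQnn)
      rw [div_mul_eq_mul_div, div_le_iff₀ (by linarith : (0:ℝ) < 5*a 0)]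
      linarith only [h6]
    have hDub : U ^ (4-q) * Y ^ q ≤ P1 * U^4 := by
      have h5 : Y ^ q ≤ P1 * U ^ q := by
        rw [← Real.mul_rpow (by linarith) hU.1]
        exact Real.rpow_le_rpow hYnn hcase hq0
      calc U ^ (4-q) * Y ^ q ≤ U ^ (4-q) * (P1 * U ^ q) := by
            exact mul_le_mul_of_nonneg_left h5 (le_of_lt hUp)
        _ = P1 * (U ^ (4-q) * U ^ q) := by ring
        _ = P1 * U^4 := by
            rw [← Real.rpow_add hU0, show (4-q)+q = ((4:ℕ):ℝ) by push_cast; ring,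
              Real.rpow_natCast]
    calc min M₁ M₂ * (U ^ (4-q) * Y ^ q) ≤ M₁ * (P1 * U^4) := by
          apply mul_le_mul (min_le_left _ _) hDub (le_of_lt hDpos) (le_of_lt hM1pos)
      _ = 2*K/(5*a 0) * U^4 := by
          rw [hM1]; field_simp
      _ ≤ Q := hQlb
  · -- Case 2 : 3 L U < Y
    have hY0 : 0 < Y := lt_trans (by positivity) hcase
    have hbu : 3 * b 0 * U ≤ a 0 * Y := by
      have h' := mul_lt_mul_of_pos_left hcase ha0
      have h'' : a 0 * (3*L*U) = 3 * b 0 * U := by rw [← hLa]; ring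
      linarith
    have ht : a 0 / 4 * Y ≤ a U * Y - b U * U := by
      have e1 := mul_le_mul_of_nonneg_right (le_of_lt hbUu) hU.1
      have e2 := mul_le_mul_of_nonneg_right (le_of_lt haUl) hYnn
      linarith
    have haQ : (a 0 / 4 * Y)^2 ≤ a U * Q := by
      have hsq : (a 0 / 4 * Y)^2 ≤ (a U * Y - b U * U)^2 :=
        pow_le_pow_left₀ (by positivity) ht 2
      rw [hQkey]; linarith
    have hQlb : a 0 / 20 * Y^2 ≤ Q := by
      have hc5 : (0:ℝ) < 5*a 0/4 := by linarith
      have h6 : (a 0 / 4 * Y)^2 ≤ (5*a 0/4) * Q :=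
        le_trans haQ (mul_le_mul_of_nonneg_right (le_of_lt haUu) hQnn)
      have h7 : (a 0 / 4 * Y)^2 / (5*a 0/4) ≤ Q := by
        rw [div_le_iff₀ hc5]; linarith
      have h8 : a 0 / 20 * Y^2 = (a 0 / 4 * Y)^2 / (5*a 0/4) := by
        field_simp; ring
      linarith
    have hUY : U ≤ Y / (3*L) := by
      rw [le_div_iff₀ (by linarith : (0:ℝ) < 3*L)]
      linarith
    have hDub : U ^ (4-q) * Y ^ q ≤ Y^4 / P2 := by
      have h5 : U ^ (4-q) ≤ Y ^ (4-q) / P2 := by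
        rw [← Real.div_rpow hYnn (by linarith)]
        exact Real.rpow_le_rpow hU.1 hUY (by linarith)
      calc U ^ (4-q) * Y ^ q ≤ (Y ^ (4-q) / P2) * Y ^ q :=
            mul_le_mul_of_nonneg_right h5 hYq
        _ = (Y ^ (4-q) * Y ^ q) / P2 := by ring
        _ = Y^4 / P2 := by
            rw [← Real.rpow_add hY0, show (4-q)+q = ((4:ℕ):ℝ) by push_cast; ring,
              Real.rpow_natCast]
    calc min M₁ M₂ * (U ^ (4-q) * Y ^ q) ≤ M₂ * (Y^4 / P2) := by
          apply mul_le_mul (min_le_right _ _) hDub (le_of_lt hDpos) (le_of_lt hM2pos)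
      _ = a 0 / 20 * Y^4 := by rw [hM2]; field_simp
      _ ≤ a 0 / 20 * Y^2 := by
          have : Y^4 ≤ Y^2 := pow_le_pow_of_le_one hYnn hY1 (by norm_num)
          have h20 : (0:ℝ) ≤ a 0 / 20 := by linarith
          exact mul_le_mul_of_nonneg_left this h20
      _ ≤ Q := hQlb
end

section
/- Let h = [[α, 0],[γ, δ]] ∈ GL₂(ℂ) (so α ≠ 0 and δ ≠ 0), and suppose there exists ρ > 0 such that the only pair (U,Y) ∈ [0,ρ]² with γU + δ ≠ 0 and αU = Y·(γU + δ) is (U,Y) = (0,0). Let 0 ≤ q ≤ 1. Then there exist M > 0 and δ₀ > 0 such that for all U, Y ∈ (0, δ₀): (i) if α·conj(δ) ∉ ℝ_{>0}, then 1/|αU − Y·(γU + δ)| ≤ M/(U^{1−q}·Y^q); (ii) if α·conj(δ) ∈ ℝ_{>0}, then 1/|αU − Y·(γU + δ)| ≤ M/(U^{2(1−q)}·Y^{2q}). -/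
set_option maxHeartbeats 1000000

open Set

/-- `posReal z` means `z ∈ ℝ_{>0}`. -/
def posReal (z : ℂ) : Prop := z.im = 0 ∧ 0 < z.re

lemma geo (U Y m q : ℝ) (hU : 0 < U) (hY : 0 < Y) (hq0 : 0 ≤ q) (hq1 : q ≤ 1)
    (hUm : U ≤ m) (hYm : Y ≤ m) : U ^ (1 - q) * Y ^ q ≤ m := by
  have hm : 0 < m := lt_of_lt_of_le hU hUm
  calc U ^ (1 - q) * Y ^ q ≤ m ^ (1 - q) * m ^ q := by
        apply mul_le_mul (Real.rpow_le_rpow hU.le hUm (by linarith))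
          (Real.rpow_le_rpow hY.le hYm hq0) (Real.rpow_nonneg hY.le q)
          (Real.rpow_nonneg hm.le _)
    _ = m ^ ((1 - q) + q) := (Real.rpow_add hm _ _).symm
    _ = m := by norm_num

lemma geo2 (U Y m q : ℝ) (hU : 0 < U) (hY : 0 < Y) (hq0 : 0 ≤ q) (hq1 : q ≤ 1)
    (hUm : U ≤ m) (hYm : Y ≤ m) : U ^ (2 * (1 - q)) * Y ^ (2 * q) ≤ m * m := by
  have h1 : U ^ (2 * (1 - q)) = U ^ (1 - q) * U ^ (1 - q) := by
    rw [← Real.rpow_add hU]; ring_nf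
  have h2 : Y ^ (2 * q) = Y ^ q * Y ^ q := by
    rw [← Real.rpow_add hY]; ring_nf
  have hg := geo U Y m q hU hY hq0 hq1 hUm hYm
  have hx : 0 ≤ U ^ (1 - q) * Y ^ q :=
    mul_nonneg (Real.rpow_nonneg hU.le _) (Real.rpow_nonneg hY.le _)
  calc U ^ (2 * (1 - q)) * Y ^ (2 * q) = (U ^ (1 - q) * Y ^ q) * (U ^ (1 - q) * Y ^ q) := by
        rw [h1, h2]; ring
    _ ≤ m * m := mul_le_mul hg hg hx (le_trans hx hg)

lemma normSq_comb (α δ : ℂ) (u y : ℝ) :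
    Complex.normSq (α * u - δ * y) =
      Complex.normSq α * (u * u) - 2 * (α * (starRingEnd ℂ) δ).re * (u * y)
        + Complex.normSq δ * (y * y) := by
  simp [Complex.normSq_apply, Complex.mul_re, Complex.mul_im, Complex.sub_re, Complex.sub_im]
  ring

lemma nontan (α δ : ℂ) (hα : α ≠ 0) (hδ : δ ≠ 0)
    (hpos : ¬ posReal (α * (starRingEnd ℂ) δ)) :
    ∃ c > (0:ℝ), ∀ u y : ℝ, 0 ≤ u → 0 ≤ y →
      c * max u y ≤ ‖α * u - δ * y‖ := by
  have hA : (0:ℝ) < ‖α‖ := norm_pos_iff.mpr hα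
  have hD : (0:ℝ) < ‖δ‖ := norm_pos_iff.mpr hδ
  set a : ℝ := (α * (starRingEnd ℂ) δ).re with ha
  set b : ℝ := (α * (starRingEnd ℂ) δ).im with hb
  set s : ℝ := ‖α‖ * ‖δ‖ with hs
  have hs0 : 0 < s := by positivity
  have habs : ‖α * (starRingEnd ℂ) δ‖ = s := by
    rw [norm_mul, Complex.norm_conj]
  have hsq : a * a + b * b = s * s := by
    have h1 : Complex.normSq (α * (starRingEnd ℂ) δ) = s ^ 2 := by
      rw [← Complex.sq_norm, habs]
    rw [Complex.normSq_apply, ← ha, ← hb] at h1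
    nlinarith [h1]
  have has : a < s := by
    rcases not_and_or.mp hpos with h | h
    · have hb2 : 0 < b * b := mul_self_pos.mpr h
      nlinarith
    · push_neg at h
      exact lt_of_le_of_lt h hs0
  set lam : ℝ := max (a / s) 0 with hlam
  have hlam0 : 0 ≤ lam := le_max_right _ _
  have hlam1 : lam < 1 := by
    apply max_lt _ one_pos
    rwa [div_lt_one hs0]
  have hals : a ≤ lam * s := by
    have h2 : a / s ≤ lam := le_max_left _ _
    calc a = (a / s) * s := by field_simp
      _ ≤ lam * s := by nlinarith
  set K : ℝ := min (‖α‖) (‖δ‖) with hK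
  have hK0 : 0 < K := lt_min hA hD
  refine ⟨Real.sqrt ((1 - lam) * K ^ 2), Real.sqrt_pos.mpr
    (mul_pos (by linarith) (pow_pos hK0 2)), ?_⟩
  intro u y hu hy
  have hum : u ≤ max u y := le_max_left _ _
  have hym : y ≤ max u y := le_max_right _ _
  have hm0 : 0 ≤ max u y := le_trans hu hum
  have hKa : K ≤ ‖α‖ := min_le_left _ _
  have hKd : K ≤ ‖δ‖ := min_le_right _ _
  have hNa : Complex.normSq α = ‖α‖ * ‖α‖ := by
    rw [← Complex.sq_norm]; ring
  have hNd : Complex.normSq δ = ‖δ‖ * ‖δ‖ := by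
    rw [← Complex.sq_norm]; ring
  have hmm : max u y * max u y ≤ u * u + y * y := by
    rcases max_choice u y with h | h <;> rw [h] <;> nlinarith
  have key : (1 - lam) * K ^ 2 * (max u y * max u y) ≤ Complex.normSq (α * u - δ * y) := by
    rw [normSq_comb, hNa, hNd, ← ha]
    have amgm : 2 * s * (u * y) ≤ ‖α‖ * ‖α‖ * (u*u)
        + ‖δ‖ * ‖δ‖ * (y*y) := by
      rw [hs]
      nlinarith [sq_nonneg (‖α‖ * u - ‖δ‖ * y)]
    have huy : 0 ≤ u * y := mul_nonneg hu hy
    have h2a : 2 * a * (u * y) ≤ lam * (‖α‖ * ‖α‖ * (u*u)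
        + ‖δ‖ * ‖δ‖ * (y*y)) := by
      have s1 : 2 * a * (u * y) ≤ 2 * (lam * s) * (u * y) := by
        have := mul_le_mul_of_nonneg_right hals huy
        nlinarith [this]
      have s2 : lam * (2 * s * (u * y)) ≤ lam * (‖α‖ * ‖α‖ * (u*u)
          + ‖δ‖ * ‖δ‖ * (y*y)) :=
        mul_le_mul_of_nonneg_left amgm hlam0
      nlinarith [s1, s2]
    have hKsq : K ^ 2 * (u*u + y*y) ≤ ‖α‖ * ‖α‖ * (u*u)
        + ‖δ‖ * ‖δ‖ * (y*y) := by
      have k1 : K * K ≤ ‖α‖ * ‖α‖ := mul_le_mul hKa hKa hK0.le hA.le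
      have k2 : K * K ≤ ‖δ‖ * ‖δ‖ := mul_le_mul hKd hKd hK0.le hD.le
      nlinarith [mul_le_mul_of_nonneg_right k1 (mul_nonneg hu hu),
        mul_le_mul_of_nonneg_right k2 (mul_nonneg hy hy)]
    nlinarith [mul_le_mul_of_nonneg_left hmm (by nlinarith : (0:ℝ) ≤ (1 - lam) * K ^ 2),
      mul_le_mul_of_nonneg_left hKsq (by linarith : (0:ℝ) ≤ 1 - lam)]
  have heq : Real.sqrt ((1 - lam) * K ^ 2) * max u y
      = Real.sqrt ((1 - lam) * K ^ 2 * (max u y * max u y)) := by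
    rw [mul_comm ((1 - lam) * K ^ 2) (max u y * max u y),
      Real.sqrt_mul (mul_self_nonneg (max u y)), Real.sqrt_mul_self hm0, mul_comm]
  rw [heq, Complex.norm_def]
  exact Real.sqrt_le_sqrt key

lemma param_of_real (β δ : ℂ) (hδ : δ ≠ 0) (him : (β * (starRingEnd ℂ) δ).im = 0) :
    β = ((β * (starRingEnd ℂ) δ).re / Complex.normSq δ : ℝ) * δ := by
  have hN : (0:ℝ) < Complex.normSq δ := Complex.normSq_pos.mpr hδ
  have hN' : (Complex.normSq δ : ℂ) ≠ 0 := by exact_mod_cast ne_of_gt hN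
  have h1 : β * (starRingEnd ℂ) δ = ((β * (starRingEnd ℂ) δ).re : ℂ) := by
    apply Complex.ext <;> simp [him]
  have h2 : ((β * (starRingEnd ℂ) δ).re : ℂ) * δ = β * Complex.normSq δ := by
    rw [← h1, mul_assoc, mul_comm ((starRingEnd ℂ) δ) δ, Complex.mul_conj]
  rw [Complex.ofReal_div, div_mul_eq_mul_div, eq_div_iff hN', h2, mul_comm]

lemma tan_param (α δ : ℂ) (hδ : δ ≠ 0) (hpos : posReal (α * (starRingEnd ℂ) δ)) :
    ∃ t : ℝ, 0 < t ∧ α = (t : ℂ) * δ := by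
  obtain ⟨him, hre⟩ := hpos
  have hN : (0:ℝ) < Complex.normSq δ := Complex.normSq_pos.mpr hδ
  exact ⟨_, div_pos hre hN, param_of_real α δ hδ him⟩

lemma im_ne (α γ δ : ℂ) (hδ : δ ≠ 0) (t : ℝ) (ht : 0 < t) (hαt : α = (t : ℂ) * δ)
    (hsol : ∃ ρ > (0 : ℝ), ∀ U Y : ℝ, U ∈ Icc 0 ρ → Y ∈ Icc 0 ρ →
      γ * U + δ ≠ 0 → α * U = Y * (γ * U + δ) → U = 0 ∧ Y = 0) :
    (γ * (starRingEnd ℂ) δ).im ≠ 0 := by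
  intro him
  obtain ⟨ρ, hρ, hs⟩ := hsol
  have hγ := param_of_real γ δ hδ him
  set r : ℝ := (γ * (starRingEnd ℂ) δ).re / Complex.normSq δ with hr
  set U : ℝ := min ρ (min (ρ / (2 * t)) (1 / (2 * (|r| + 1)))) with hUdef
  have habs : (0:ℝ) < |r| + 1 := by positivity
  have hU0 : 0 < U := by
    apply lt_min hρ (lt_min (by positivity) (by positivity))
  have hUρ : U ≤ ρ := min_le_left _ _
  have hU2 : U ≤ ρ / (2 * t) := le_trans (min_le_right _ _) (min_le_left _ _)
  have hU3 : U ≤ 1 / (2 * (|r| + 1)) := le_trans (min_le_right _ _) (min_le_right _ _)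
  have hrU : |r| * U ≤ 1 / 2 := by
    have h1 : |r| * U ≤ (|r| + 1) * (1 / (2 * (|r| + 1))) := by
      apply mul_le_mul (by linarith) hU3 hU0.le (by linarith)
    have h2 : (|r| + 1) * (1 / (2 * (|r| + 1))) = 1 / 2 := by field_simp
    linarith
  have hr1 : (1:ℝ)/2 ≤ r * U + 1 := by
    have := neg_abs_le r
    nlinarith [hU0.le]
  have hr1' : r * U + 1 ≠ 0 := by linarith
  set Y : ℝ := t * U / (r * U + 1) with hYdef
  have hY0 : 0 ≤ Y := div_nonneg (by positivity) (by linarith)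
  have hYρ : Y ≤ ρ := by
    have h4 : Y ≤ 2 * (t * U) := by
      rw [div_le_iff₀ (by linarith)]
      nlinarith [mul_nonneg (mul_nonneg ht.le hU0.le) (by linarith : (0:ℝ) ≤ r * U + 1/2)]
    have h5 : 2 * t * U ≤ ρ := by
      rw [le_div_iff₀ (by positivity : (0:ℝ) < 2*t)] at hU2
      nlinarith
    linarith [h4, h5]
  have hform : γ * (U:ℂ) + δ = ((r * U + 1 : ℝ) : ℂ) * δ := by
    rw [hγ]; push_cast; ring
  have hne : γ * (U:ℂ) + δ ≠ 0 := by
    rw [hform]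
    exact mul_ne_zero (by exact_mod_cast hr1') hδ
  have hYeq : Y * (r * U + 1) = t * U := by
    rw [hYdef]; exact div_mul_cancel₀ _ hr1'
  have heq : α * (U:ℂ) = (Y:ℂ) * (γ * U + δ) := by
    rw [hαt, hform]
    have : ((Y * (r * U + 1) : ℝ) : ℂ) = ((t * U : ℝ) : ℂ) := by exact_mod_cast hYeq
    push_cast at this ⊢
    rw [← mul_assoc, this]; ring
  obtain ⟨h1, _⟩ := hs U Y ⟨hU0.le, hUρ⟩ ⟨hY0, hYρ⟩ hne heq
  exact absurd h1 (ne_of_gt hU0)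

lemma tan_lower (γ δ : ℂ) (hδ : δ ≠ 0) (t : ℝ) (ht : 0 < t)
    (hb2 : (γ * (starRingEnd ℂ) δ).im ≠ 0) :
    ∃ c > (0:ℝ), ∃ d₀ > (0:ℝ), d₀ ≤ 1 ∧ ∀ U Y : ℝ, 0 < U → U < d₀ → 0 < Y → Y < d₀ →
      c * (max U Y * max U Y) ≤ ‖(t:ℂ) * δ * U - Y * (γ * U + δ)‖ := by
  set N : ℝ := Complex.normSq δ with hN
  set b₁ : ℝ := (γ * (starRingEnd ℂ) δ).re with hb1
  set b₂ : ℝ := (γ * (starRingEnd ℂ) δ).im with hb2d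
  set D : ℝ := ‖δ‖ with hD
  have hN0 : 0 < N := Complex.normSq_pos.mpr hδ
  have hD0 : 0 < D := norm_pos_iff.mpr hδ
  have hb20 : 0 < |b₂| := abs_pos.mpr hb2
  set κ : ℝ := min t t⁻¹ / 2 with hκ
  have hκ0 : 0 < κ := by
    have : 0 < min t t⁻¹ := lt_min ht (by positivity)
    positivity
  have hκt : κ ≤ t / 2 := by
    have := min_le_left t t⁻¹; simp only [hκ]; linarith
  have hκti : t * κ ≤ 1 / 2 := by
    have h1 : κ ≤ t⁻¹ / 2 := by
      have := min_le_right t t⁻¹; simp only [hκ]; linarith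
    have h2 : t * κ ≤ t * (t⁻¹ / 2) := by nlinarith
    have h3 : t * (t⁻¹ / 2) = 1/2 := by field_simp
    linarith
  have hκ12 : κ ≤ 1/2 := by
    rcases le_total t 1 with h | h
    · linarith [hκt]
    · have h2 : t⁻¹ ≤ 1 := inv_le_one_of_one_le₀ h
      have h3 := min_le_right t t⁻¹
      simp only [hκ]; linarith
  set cnum : ℝ := min (|b₂| * κ) (min (N * t / 4) (N / 4)) with hcnum
  have hcnum0 : 0 < cnum := lt_min (by positivity) (lt_min (by positivity) (by positivity))
  set d₀ : ℝ := min 1 (min (N * t / (4 * (|b₁| + 1))) (N / (4 * (|b₁| + 1)))) with hd₀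
  have hd₀0 : 0 < d₀ := lt_min one_pos (lt_min (by positivity) (by positivity))
  refine ⟨cnum / D, by positivity, d₀, hd₀0, min_le_left _ _, ?_⟩
  intro U Y hU0 hUd hY0 hYd
  set m : ℝ := max U Y with hm
  have hUm : U ≤ m := le_max_left _ _
  have hYm : Y ≤ m := le_max_right _ _
  have hm0 : 0 < m := lt_of_lt_of_le hU0 hUm
  have hm1 : m ≤ 1 := by
    rcases max_choice U Y with h | h <;> rw [← hm] at h <;> rw [h]
    · exact le_trans hUd.le (min_le_left _ _)
    · exact le_trans hYd.le (min_le_left _ _)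
  have hdb1 : d₀ ≤ N * t / (4 * (|b₁| + 1)) := le_trans (min_le_right _ _) (min_le_left _ _)
  have hdb2 : d₀ ≤ N / (4 * (|b₁| + 1)) := le_trans (min_le_right _ _) (min_le_right _ _)
  set f : ℂ := (t:ℂ) * δ * U - Y * (γ * U + δ) with hf
  have hdd : (starRingEnd ℂ) δ * δ = (N:ℂ) := by rw [mul_comm, Complex.mul_conj]
  have hg : (starRingEnd ℂ) δ * f
      = ((N * (t * U) - N * Y : ℝ) : ℂ) - (γ * (starRingEnd ℂ) δ) * ((U * Y : ℝ) : ℂ) := by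
    rw [hf]; push_cast
    linear_combination ((t:ℂ) * U - (Y:ℂ)) * hdd
  have hgre : ((starRingEnd ℂ) δ * f).re = N * (t * U) - N * Y - b₁ * (U * Y) := by
    rw [hg, Complex.sub_re, Complex.ofReal_re, Complex.mul_re, Complex.ofReal_re,
      Complex.ofReal_im, ← hb1]
    ring
  have hgim : ((starRingEnd ℂ) δ * f).im = -(b₂ * (U * Y)) := by
    rw [hg, Complex.sub_im, Complex.ofReal_im, Complex.mul_im, Complex.ofReal_re,
      Complex.ofReal_im, ← hb2d]
    ring
  have hgabs : ‖(starRingEnd ℂ) δ * f‖ = D * ‖f‖ := by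
    rw [norm_mul, Complex.norm_conj]
  have hre_le : |N * (t * U) - N * Y - b₁ * (U * Y)| ≤ D * ‖f‖ := by
    rw [← hgre, ← hgabs]; exact Complex.abs_re_le_norm _
  have him_le : |b₂| * (U * Y) ≤ D * ‖f‖ := by
    have h1 := Complex.abs_im_le_norm ((starRingEnd ℂ) δ * f)
    rw [hgim, hgabs, abs_neg, abs_mul, abs_of_pos (mul_pos hU0 hY0)] at h1
    exact h1
  have hcn1 : cnum ≤ |b₂| * κ := min_le_left _ _
  have hcn2 : cnum ≤ N * t / 4 := le_trans (min_le_right _ _) (min_le_left _ _)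
  have hcn3 : cnum ≤ N / 4 := le_trans (min_le_right _ _) (min_le_right _ _)
  have hMor : m = U ∨ m = Y := max_choice U Y
  clear_value N b₁ b₂ D κ cnum d₀ m f
  clear hN hb1 hb2d hD hκ hcnum hd₀ hm hf hg
  rw [div_mul_eq_mul_div, div_le_iff₀ hD0]
  -- goal : cnum * (m * m) ≤ ‖f‖ * D
  by_cases hc : κ * (m * m) ≤ U * Y
  · have h1 : cnum * (m * m) ≤ |b₂| * κ * (m * m) :=
      mul_le_mul_of_nonneg_right hcn1 (by positivity)
    have h2 : |b₂| * κ * (m * m) = |b₂| * (κ * (m * m)) := by ring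
    have h3 : |b₂| * (κ * (m * m)) ≤ |b₂| * (U * Y) :=
      mul_le_mul_of_nonneg_left hc hb20.le
    nlinarith [him_le]
  · push_neg at hc
    rcases hMor with hM | hM
    · -- m = U, so Y < κ U
      have hYκ : Y < κ * U := by
        rw [hM] at hc
        have : U * Y < U * (κ * U) := by nlinarith
        exact lt_of_mul_lt_mul_left this hU0.le
      have hb1UY : b₁ * (U * Y) ≤ N * t / 4 * U := by
        have e1 : b₁ * (U * Y) ≤ |b₁| * (U * Y) := by
          nlinarith [le_abs_self b₁, mul_pos hU0 hY0]
        have hYU : Y ≤ U := by linarith [hYκ, mul_le_mul_of_nonneg_right hκ12 hU0.le]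
        have e2 : |b₁| * (U * Y) ≤ |b₁| * (U * U) :=
          mul_le_mul_of_nonneg_left (mul_le_mul_of_nonneg_left hYU hU0.le) (abs_nonneg b₁)
        have eUU : U * U ≤ d₀ * U := mul_le_mul_of_nonneg_right hUd.le hU0.le
        have e3 : |b₁| * (U * U) ≤ (|b₁| + 1) * (d₀ * U) := by
          have e3a := mul_le_mul_of_nonneg_left eUU (abs_nonneg b₁)
          have e3b : |b₁| * (d₀ * U) ≤ (|b₁| + 1) * (d₀ * U) :=
            mul_le_mul_of_nonneg_right (by linarith) (by positivity)
          linarith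
        have e4 : (|b₁| + 1) * d₀ ≤ N * t / 4 := by
          have e4a := mul_le_mul_of_nonneg_left hdb1
            (by positivity : (0:ℝ) ≤ |b₁| + 1)
          have e4b : (|b₁| + 1) * (N * t / (4 * (|b₁| + 1))) = N * t / 4 := by
            field_simp
          linarith
        linarith [e1, e2, e3, mul_le_mul_of_nonneg_right e4 hU0.le]
      have hNY : N * Y ≤ N * t / 2 * U := by
        nlinarith [mul_le_mul_of_nonneg_left hYκ.le hN0.le,
          mul_le_mul_of_nonneg_right hκt (mul_nonneg hN0.le hU0.le)]
      have hre_lb : N * t / 4 * U ≤ N * (t * U) - N * Y - b₁ * (U * Y) := by nlinarith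
      have habs1 : N * t / 4 * U ≤ D * ‖f‖ :=
        le_trans (le_trans hre_lb (le_abs_self _)) hre_le
      have hU1 : U ≤ 1 := by rw [hM] at hm1; exact hm1
      have h6 : cnum * (m * m) ≤ N * t / 4 * U := by
        rw [hM]
        have hUU : U * U ≤ U := by linarith [mul_le_mul_of_nonneg_right hU1 hU0.le]
        linarith [mul_le_mul_of_nonneg_right hcn2 (mul_nonneg hU0.le hU0.le),
          mul_le_mul_of_nonneg_left hUU (by positivity : (0:ℝ) ≤ N * t / 4)]
      linarith
    · -- m = Y, so U < κ Y
      have hUκ : U < κ * Y := by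
        rw [hM] at hc
        have : Y * U < Y * (κ * Y) := by nlinarith
        exact lt_of_mul_lt_mul_left this hY0.le
      have hb1UY : -(b₁ * (U * Y)) ≤ N / 4 * Y := by
        have e1 : -(b₁ * (U * Y)) ≤ |b₁| * (U * Y) := by
          nlinarith [neg_abs_le b₁, mul_pos hU0 hY0]
        have hUY' : U ≤ Y := by linarith [hUκ, mul_le_mul_of_nonneg_right hκ12 hY0.le]
        have e2 : |b₁| * (U * Y) ≤ |b₁| * (Y * Y) := by
          nlinarith [abs_nonneg b₁, mul_le_mul_of_nonneg_right hUY' hY0.le]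
        have eYY : Y * Y ≤ d₀ * Y := mul_le_mul_of_nonneg_right hYd.le hY0.le
        have e3 : |b₁| * (Y * Y) ≤ (|b₁| + 1) * (d₀ * Y) := by
          have e3a := mul_le_mul_of_nonneg_left eYY (abs_nonneg b₁)
          have e3b : |b₁| * (d₀ * Y) ≤ (|b₁| + 1) * (d₀ * Y) :=
            mul_le_mul_of_nonneg_right (by linarith) (by positivity)
          linarith
        have e4 : (|b₁| + 1) * d₀ ≤ N / 4 := by
          have e4a := mul_le_mul_of_nonneg_left hdb2
            (by positivity : (0:ℝ) ≤ |b₁| + 1)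
          have e4b : (|b₁| + 1) * (N / (4 * (|b₁| + 1))) = N / 4 := by
            field_simp
          linarith
        linarith [e1, e2, e3, mul_le_mul_of_nonneg_right e4 hY0.le]
      have hNtU : N * (t * U) ≤ N / 2 * Y := by
        nlinarith [mul_le_mul_of_nonneg_left hUκ.le (mul_nonneg hN0.le ht.le),
          mul_le_mul_of_nonneg_right hκti (mul_nonneg hN0.le hY0.le)]
      have hre_lb : N / 4 * Y ≤ -(N * (t * U) - N * Y - b₁ * (U * Y)) := by nlinarith
      have habs1 : N / 4 * Y ≤ D * ‖f‖ := by
        have h5 : N / 4 * Y ≤ |N * (t * U) - N * Y - b₁ * (U * Y)| :=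
          le_trans hre_lb (neg_le_abs _)
        exact le_trans h5 hre_le
      have hY1 : Y ≤ 1 := by rw [hM] at hm1; exact hm1
      have h6 : cnum * (m * m) ≤ N / 4 * Y := by
        rw [hM]
        have hYY : Y * Y ≤ Y := by linarith [mul_le_mul_of_nonneg_right hY1 hY0.le]
        linarith [mul_le_mul_of_nonneg_right hcn3 (mul_nonneg hY0.le hY0.le),
          mul_le_mul_of_nonneg_left hYY (by positivity : (0:ℝ) ≤ N / 4)]
      linarith

theorem stmt7 (α γ δ : ℂ) (hα : α ≠ 0) (hδ : δ ≠ 0) (q : ℝ)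
    (hq0 : 0 ≤ q) (hq1 : q ≤ 1)
    (hsol : ∃ ρ > (0 : ℝ), ∀ U Y : ℝ, U ∈ Icc 0 ρ → Y ∈ Icc 0 ρ →
      γ * U + δ ≠ 0 → α * U = Y * (γ * U + δ) → U = 0 ∧ Y = 0) :
    ∃ M > (0 : ℝ), ∃ δ₀ > (0 : ℝ), ∀ U Y : ℝ, 0 < U → U < δ₀ → 0 < Y → Y < δ₀ →
      (¬ posReal (α * (starRingEnd ℂ) δ) →
        1 / ‖α * U - Y * (γ * U + δ)‖ ≤ M / (U ^ (1 - q) * Y ^ q)) ∧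
      (posReal (α * (starRingEnd ℂ) δ) →
        1 / ‖α * U - Y * (γ * U + δ)‖ ≤
          M / (U ^ (2 * (1 - q)) * Y ^ (2 * q))) := by
  by_cases hpos : posReal (α * (starRingEnd ℂ) δ)
  · -- tangent case
    obtain ⟨t, ht, hαt⟩ := tan_param α δ hδ hpos
    have hb2 := im_ne α γ δ hδ t ht hαt hsol
    obtain ⟨c, hc0, d₀, hd₀0, hd₀1, hlow⟩ := tan_lower γ δ hδ t ht hb2
    refine ⟨1 / c, by positivity, d₀, hd₀0, ?_⟩
    intro U Y hU0 hUd hY0 hYd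
    refine ⟨fun h => absurd hpos h, fun _ => ?_⟩
    have hlb := hlow U Y hU0 hUd hY0 hYd
    rw [← hαt] at hlb
    have hUm : U ≤ max U Y := le_max_left _ _
    have hYm : Y ≤ max U Y := le_max_right _ _
    have hden0 : 0 < U ^ (2 * (1 - q)) * Y ^ (2 * q) :=
      mul_pos (Real.rpow_pos_of_pos hU0 _) (Real.rpow_pos_of_pos hY0 _)
    have hgeo := geo2 U Y (max U Y) q hU0 hY0 hq0 hq1 hUm hYm
    have hfin : c * (U ^ (2 * (1 - q)) * Y ^ (2 * q))
        ≤ ‖α * U - Y * (γ * U + δ)‖ :=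
      le_trans (mul_le_mul_of_nonneg_left hgeo hc0.le) hlb
    have h7 := one_div_le_one_div_of_le (mul_pos hc0 hden0) hfin
    have h8 : 1 / (c * (U ^ (2 * (1 - q)) * Y ^ (2 * q)))
        = (1 / c) / (U ^ (2 * (1 - q)) * Y ^ (2 * q)) := by
      field_simp
    linarith [h7, h8.le, h8.ge]
  · -- non-tangent case
    obtain ⟨c, hc0, hlow⟩ := nontan α δ hα hδ hpos
    have hγ1 : (0:ℝ) < ‖γ‖ + 1 := by positivity
    set δ₀ : ℝ := min 1 (c / (2 * (‖γ‖ + 1))) with hδ₀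
    have hδ₀0 : 0 < δ₀ := lt_min one_pos (by positivity)
    refine ⟨2 / c, by positivity, δ₀, hδ₀0, ?_⟩
    intro U Y hU0 hUd hY0 hYd
    refine ⟨fun _ => ?_, fun h => absurd h hpos⟩
    have hUm : U ≤ max U Y := le_max_left _ _
    have hYm : Y ≤ max U Y := le_max_right _ _
    have hm0 : 0 < max U Y := lt_of_lt_of_le hU0 hUm
    have hmδ : max U Y ≤ δ₀ := max_le hUd.le hYd.le
    have hm1 : max U Y ≤ 1 := le_trans hmδ (min_le_left _ _)
    have hmc : max U Y ≤ c / (2 * (‖γ‖ + 1)) :=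
      le_trans hmδ (min_le_right _ _)
    have hsplit : α * (U:ℂ) - (Y:ℂ) * (γ * (U:ℂ) + δ)
        = (α * (U:ℂ) - δ * (Y:ℂ)) - γ * ((U * Y : ℝ):ℂ) := by
      push_cast; ring
    have htri : ‖α * (U:ℂ) - δ * (Y:ℂ)‖ - ‖γ * ((U * Y : ℝ):ℂ)‖
        ≤ ‖α * U - Y * (γ * U + δ)‖ := by
      rw [hsplit]
      simpa using
        norm_sub_norm_le (α * (U:ℂ) - δ * (Y:ℂ)) (γ * ((U * Y : ℝ):ℂ))
    have hA1 : c * max U Y ≤ ‖α * (U:ℂ) - δ * (Y:ℂ)‖ :=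
      hlow U Y hU0.le hY0.le
    have hγUY : ‖γ * ((U * Y : ℝ):ℂ)‖ = ‖γ‖ * (U * Y) := by
      rw [norm_mul, Complex.norm_real, Real.norm_eq_abs, abs_of_pos (mul_pos hU0 hY0)]
    have hUY : U * Y ≤ max U Y * max U Y :=
      mul_le_mul hUm hYm hY0.le hm0.le
    have hsmall : ‖γ‖ * (U * Y) ≤ c / 2 * max U Y := by
      have s1 : ‖γ‖ * (U * Y) ≤ ‖γ‖ * (max U Y * max U Y) :=
        mul_le_mul_of_nonneg_left hUY (norm_nonneg γ)
      have s2 : ‖γ‖ * max U Y ≤ (‖γ‖ + 1) * (c / (2 * (‖γ‖ + 1))) := by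
        apply mul_le_mul (by linarith) hmc hm0.le (by linarith)
      have s3 : (‖γ‖ + 1) * (c / (2 * (‖γ‖ + 1))) = c / 2 := by
        field_simp
      have s4 : ‖γ‖ * (max U Y * max U Y) ≤ (c / 2) * max U Y := by
        calc ‖γ‖ * (max U Y * max U Y)
            = (‖γ‖ * max U Y) * max U Y := by ring
          _ ≤ (c / 2) * max U Y := by
              apply mul_le_mul_of_nonneg_right _ hm0.le
              linarith
      linarith
    have hmain : c / 2 * max U Y ≤ ‖α * U - Y * (γ * U + δ)‖ := by
      rw [hγUY] at htri
      linarith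
    have hden0 : 0 < U ^ (1 - q) * Y ^ q :=
      mul_pos (Real.rpow_pos_of_pos hU0 _) (Real.rpow_pos_of_pos hY0 _)
    have hgeo := geo U Y (max U Y) q hU0 hY0 hq0 hq1 hUm hYm
    have hfin : c / 2 * (U ^ (1 - q) * Y ^ q)
        ≤ ‖α * U - Y * (γ * U + δ)‖ :=
      le_trans (mul_le_mul_of_nonneg_left hgeo (by linarith)) hmain
    have h7 := one_div_le_one_div_of_le (mul_pos (by linarith) hden0) hfin
    have h8 : 1 / (c / 2 * (U ^ (1 - q) * Y ^ q))
        = (2 / c) / (U ^ (1 - q) * Y ^ q) := by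
      field_simp
    linarith [h7, h8.le, h8.ge]
end

section
/- Let g ∈ GL₂(ℂ) act on the Riemann sphere Ĉ = ℂ ∪ {∞} by Möbius transformations, let [1,+∞] = {x ∈ ℝ : x ≥ 1} ∪ {∞} ⊆ Ĉ, and set V(g) = {g1, g∞} ∩ {1, ∞}. Assume g([1,+∞]) ∩ [1,+∞] ⊆ V(g). Let N be an open neighborhood in Ĉ × Ĉ of the finite set {(g^{−1}X₀, X₀) : X₀ ∈ V(g)}. Then there exist ε > 0 and M > 0 such that for all (T,X) ∈ (W_{1,ε} × W_{1,ε}) ∖ N with j_D(g,T) ≠ 0 and gT ≠ X, one has |1/(j_D(g,T)) · 1/(1 − (gT)/X)| ≤ M/|T|, where W_{1,ε} = {z ∈ ℂ : 0 < |z−1| < ε} ∪ {x ∈ ℝ : x > 1}. -/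
open Set

/-- The Möbius transformation associated with the matrix `[[a,b],[c,d]]`, acting on the
Riemann sphere `Ĉ = ℂ ∪ {∞}`, with the usual conventions `gz = ∞` when `cz+d = 0`,
`g∞ = a/c` if `c ≠ 0` and `g∞ = ∞` if `c = 0`. -/
noncomputable def mob (a b c d : ℂ) (z : OnePoint ℂ) : OnePoint ℂ :=
  Option.elim (show Option ℂ from z)
    (if c = 0 then OnePoint.infty else (((a / c : ℂ) : OnePoint ℂ)))
    (fun w => if c * w + d = 0 then OnePoint.infty
      else (((a * w + b) / (c * w + d) : ℂ) : OnePoint ℂ))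

/-- The circular arc `[1,+∞] = {x ∈ ℝ : x ≥ 1} ∪ {∞}` in the Riemann sphere. -/
def raySet : Set (OnePoint ℂ) :=
  {z | ∃ x : ℝ, 1 ≤ x ∧ z = ((x : ℂ) : OnePoint ℂ)} ∪ {OnePoint.infty}

/-- `V(g) = {g1, g∞} ∩ {1, ∞}`. -/
noncomputable def Vset (a b c d : ℂ) : Set (OnePoint ℂ) :=
  ({mob a b c d (((1 : ℂ) : OnePoint ℂ)), mob a b c d OnePoint.infty} : Set (OnePoint ℂ)) ∩
    ({((1 : ℂ) : OnePoint ℂ), OnePoint.infty} : Set (OnePoint ℂ))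

/-- `W_{1,ε} = {z ∈ ℂ : 0 < |z−1| < ε} ∪ {x ∈ ℝ : x > 1}`. -/
def Wset (ε : ℝ) : Set ℂ :=
  {z | 0 < ‖z - 1‖ ∧ ‖z - 1‖ < ε} ∪
    {z | ∃ x : ℝ, 1 < x ∧ z = (x : ℂ)}

/-! ### Auxiliary material -/

lemma mob_infty' (a b c d : ℂ) : mob a b c d OnePoint.infty =
    if c = 0 then OnePoint.infty else (((a / c : ℂ)) : OnePoint ℂ) := rfl

lemma mob_coe' (a b c d w : ℂ) : mob a b c d ((w : ℂ) : OnePoint ℂ) =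
    if c * w + d = 0 then OnePoint.infty
      else (((a * w + b) / (c * w + d) : ℂ) : OnePoint ℂ) := rfl

/-- The chart `1/z` at infinity, as a map `Ĉ → ℂ` (with junk value at `0`). -/
noncomputable def invC : OnePoint ℂ → ℂ := fun z => Option.elim (show Option ℂ from z) 0 Inv.inv

@[simp] lemma invC_infty : invC OnePoint.infty = 0 := rfl
@[simp] lemma invC_coe (z : ℂ) : invC ((z : ℂ) : OnePoint ℂ) = z⁻¹ := rfl

lemma contAt_invC_infty : ContinuousAt invC OnePoint.infty := by
  rw [OnePoint.continuousAt_infty']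
  have h : Filter.Tendsto (fun z : ℂ => z⁻¹) (Filter.cocompact ℂ) (nhds 0) := by
    rw [← Metric.cobounded_eq_cocompact]
    exact Filter.tendsto_inv₀_cobounded
  rw [Filter.coclosedCompact_eq_cocompact]
  exact h.congr (fun z => rfl)

lemma contAt_invC {z : OnePoint ℂ} (hz : z ≠ ((0 : ℂ) : OnePoint ℂ)) : ContinuousAt invC z := by
  induction z using OnePoint.rec with
  | infty => exact contAt_invC_infty
  | coe w =>
    rw [OnePoint.continuousAt_coe]
    have hw : w ≠ 0 := by simpa [OnePoint.coe_eq_coe] using hz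
    have : ContinuousAt (fun z : ℂ => z⁻¹) w := continuousAt_inv₀ hw
    exact this.congr (by filter_upwards with x; simp [Function.comp])

/-- The norm of the homogenized denominator, in the chart `1/z` at infinity. -/
noncomputable def phiF (a b c d : ℂ) (p : OnePoint ℂ × OnePoint ℂ) : ℝ :=
  ‖c + d * invC p.1 - a * invC p.2 - b * (invC p.1 * invC p.2)‖

lemma contAt_phiF (a b c d : ℂ) {p : OnePoint ℂ × OnePoint ℂ}
    (h1 : p.1 ≠ ((0 : ℂ) : OnePoint ℂ)) (h2 : p.2 ≠ ((0 : ℂ) : OnePoint ℂ)) :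
    ContinuousAt (phiF a b c d) p := by
  have i1 : ContinuousAt (fun q : OnePoint ℂ × OnePoint ℂ => invC q.1) p :=
    (contAt_invC h1).comp continuousAt_fst
  have i2 : ContinuousAt (fun q : OnePoint ℂ × OnePoint ℂ => invC q.2) p :=
    (contAt_invC h2).comp continuousAt_snd
  have hc : ContinuousAt (fun q : OnePoint ℂ × OnePoint ℂ =>
      c + d * invC q.1 - a * invC q.2 - b * (invC q.1 * invC q.2)) p :=
    ((continuousAt_const.add (continuousAt_const.mul i1)).sub
      (continuousAt_const.mul i2)).sub (continuousAt_const.mul (i1.mul i2))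
  exact continuous_norm.continuousAt.comp hc

def rayC : Set ℂ := {z : ℂ | ∃ x : ℝ, 1 ≤ x ∧ z = (x : ℂ)}

def Kc (ε : ℝ) : Set ℂ := Metric.closedBall 1 ε ∪ rayC

/-- The closed neighborhoods of the ray in the Riemann sphere. -/
def KS (ε : ℝ) : Set (OnePoint ℂ) :=
  (fun z : ℂ => (z : OnePoint ℂ)) '' Kc ε ∪ {OnePoint.infty}

lemma isClosed_rayC : IsClosed rayC := by
  have : rayC = (fun x : ℝ => (x : ℂ)) '' Ici 1 := by
    ext z; simp [rayC, eq_comm]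
  rw [this]
  exact (Complex.isometry_ofReal.isClosedEmbedding.isClosedMap) _ isClosed_Ici

lemma isClosed_Kc (ε : ℝ) : IsClosed (Kc ε) :=
  Metric.isClosed_closedBall.union isClosed_rayC

lemma isClosed_KS (ε : ℝ) : IsClosed (KS ε) := by
  rw [← isOpen_compl_iff]
  have : (KS ε)ᶜ = (fun z : ℂ => (z : OnePoint ℂ)) '' (Kc ε)ᶜ := by
    ext z
    induction z using OnePoint.rec with
    | infty => simp [KS]
    | coe w => simp [KS, OnePoint.coe_eq_coe]
  rw [this]
  exact OnePoint.isOpen_image_coe.2 (isClosed_Kc ε).isOpen_compl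

lemma isCompact_KS (ε : ℝ) : IsCompact (KS ε) := (isClosed_KS ε).isCompact

lemma KS_mono {ε ε' : ℝ} (h : ε ≤ ε') : KS ε ⊆ KS ε' := by
  apply union_subset_union _ subset_rfl
  exact image_mono (union_subset_union (Metric.closedBall_subset_closedBall h) subset_rfl)

lemma ne_zero_of_mem_KS {z : OnePoint ℂ} {ε : ℝ} (hε : ε ≤ 1/2) (hz : z ∈ KS ε) :
    z ≠ ((0 : ℂ) : OnePoint ℂ) := by
  induction z using OnePoint.rec with
  | infty => simp [OnePoint.infty_ne_coe]
  | coe w =>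
    rcases hz with ⟨v, hv, hvw⟩ | h
    · rw [OnePoint.coe_eq_coe] at hvw; subst hvw
      rw [Ne, OnePoint.coe_eq_coe]
      rintro rfl
      rcases hv with hb | ⟨x, hx, hx0⟩
      · rw [Metric.mem_closedBall] at hb
        have : dist (0 : ℂ) 1 = 1 := by simp [Complex.dist_eq]
        linarith [hb, this.symm.le]
      · have : (x : ℂ) = 0 := hx0.symm
        have : x = 0 := by exact_mod_cast this
        linarith
    · simp at h

lemma mem_iInter_KS {z : OnePoint ℂ} (h : ∀ n : ℕ, z ∈ KS ((1/2) / (n + 1))) : z ∈ raySet := by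
  induction z using OnePoint.rec with
  | infty => exact Or.inr rfl
  | coe w =>
    left
    have hw : ∀ n : ℕ, w ∈ Kc ((1/2) / (n + 1)) := by
      intro n
      rcases h n with ⟨v, hv, hvw⟩ | hinf
      · rw [OnePoint.coe_eq_coe] at hvw; subst hvw; exact hv
      · simp at hinf
    by_cases hray : w ∈ rayC
    · obtain ⟨x, hx, rfl⟩ := hray; exact ⟨x, hx, rfl⟩
    · have hball : ∀ n : ℕ, dist w 1 ≤ (1/2) / (n + 1) := by
        intro n
        rcases hw n with hb | hr
        · exact Metric.mem_closedBall.1 hb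
        · exact absurd hr hray
      have h0 : dist w 1 ≤ 0 := by
        by_contra hpos
        push_neg at hpos
        obtain ⟨n, hn⟩ := exists_nat_gt ((1/2) / dist w 1)
        have h1 : (1/2) / (n + 1 : ℝ) < dist w 1 := by
          rw [div_lt_iff₀ (by positivity)]
          rw [div_lt_iff₀ hpos] at hn
          nlinarith
        linarith [hball n]
      have : w = 1 := by
        have hd := dist_nonneg (x := w) (y := 1)
        have : dist w 1 = 0 := le_antisymm h0 hd
        simpa [dist_eq_zero] using this
      exact ⟨1, le_refl 1, by simp [this]⟩

/-- If `gT = X` then applying the inverse matrix to `X` gives back `T`. -/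
lemma mob_inv {a b c d : ℂ} (hdet : a * d - b * c ≠ 0) {T X : OnePoint ℂ}
    (h : mob a b c d T = X) : mob d (-b) (-c) a X = T := by
  induction T using OnePoint.rec with
  | infty =>
    rw [mob_infty'] at h
    by_cases hc : c = 0
    · rw [if_pos hc] at h
      subst h
      rw [mob_infty', if_pos (by simp [hc])]
    · rw [if_neg hc] at h
      subst h
      rw [mob_coe', if_pos (by field_simp; ring)]
  | coe t =>
    rw [mob_coe'] at h
    by_cases h0 : c * t + d = 0
    · rw [if_pos h0] at h
      subst h
      have hc : c ≠ 0 := by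
        rintro rfl
        simp only [zero_mul, zero_add] at h0
        subst h0
        simp at hdet
      rw [mob_infty', if_neg (neg_ne_zero.mpr hc), OnePoint.coe_eq_coe,
        div_eq_iff (neg_ne_zero.mpr hc)]
      linear_combination h0
    · rw [if_neg h0] at h
      subst h
      have hden : -c * ((a * t + b) / (c * t + d)) + a ≠ 0 := by
        intro hz
        apply hdet
        have h2 : (-c * ((a * t + b) / (c * t + d)) + a) * (c * t + d) = 0 := by
          rw [hz, zero_mul]
        rw [add_mul, mul_assoc, div_mul_cancel₀ _ h0] at h2
        linear_combination h2
      rw [mob_coe', if_neg hden, OnePoint.coe_eq_coe, div_eq_iff hden]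
      linear_combination (div_mul_cancel₀ (a * t + b) h0)

/-- On `raySet × raySet`, a zero of `phiF` means `mob T = X`. -/
lemma phi_zero {a b c d : ℂ} (hdet : a * d - b * c ≠ 0) {T X : OnePoint ℂ}
    (hT : T ∈ raySet) (hX : X ∈ raySet) (h : phiF a b c d (T, X) = 0) :
    mob a b c d T = X := by
  have h0 : c + d * invC T - a * invC X - b * (invC T * invC X) = 0 := by
    have h' : ‖c + d * invC T - a * invC X - b * (invC T * invC X)‖ = 0 := h
    exact norm_eq_zero.mp h'
  rcases hT with ⟨x, hx1, rfl⟩ | hT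
  · have hx0 : (x : ℂ) ≠ 0 := by
      simp only [ne_eq, Complex.ofReal_eq_zero]; intro hh; rw [hh] at hx1; linarith
    rcases hX with ⟨y, hy1, rfl⟩ | hX
    · -- both finite
      have hy0 : (y : ℂ) ≠ 0 := by
        simp only [ne_eq, Complex.ofReal_eq_zero]; intro hh; rw [hh] at hy1; linarith
      simp only [invC_coe] at h0
      have key : c * x * y + d * y - a * x - b = 0 := by
        have h2 : (c + d * (x : ℂ)⁻¹ - a * (y : ℂ)⁻¹ - b * ((x : ℂ)⁻¹ * (y : ℂ)⁻¹))
            * (x * y) = 0 := by rw [h0, zero_mul]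
        field_simp at h2
        linear_combination h2
      have hcd : c * (x : ℂ) + d ≠ 0 := by
        intro hcd0
        have hab : a * (x : ℂ) + b = 0 := by
          have h3 : (c * (x : ℂ) + d) * y - (a * x + b) = 0 := by linear_combination key
          rw [hcd0] at h3
          linear_combination -h3
        exact hdet (by linear_combination a * hcd0 - c * hab)
      rw [mob_coe', if_neg hcd, OnePoint.coe_eq_coe, div_eq_iff hcd]
      linear_combination -key
    · -- T finite, X = ∞
      simp only [mem_singleton_iff] at hX
      subst hX
      simp only [invC_coe, invC_infty, mul_zero, sub_zero] at h0
      have hcd : c * (x : ℂ) + d = 0 := by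
        have h2 : (c + d * (x : ℂ)⁻¹) * x = 0 := by rw [h0, zero_mul]
        field_simp at h2
        linear_combination h2
      rw [mob_coe', if_pos hcd]
  · -- T = ∞
    simp only [mem_singleton_iff] at hT
    subst hT
    rcases hX with ⟨y, hy1, rfl⟩ | hX
    · have hy0 : (y : ℂ) ≠ 0 := by
        simp only [ne_eq, Complex.ofReal_eq_zero]; intro hh; rw [hh] at hy1; linarith
      simp only [invC_infty, invC_coe, mul_zero, zero_mul, sub_zero, add_zero] at h0
      have key : c * y = a := by
        have h2 : (c - a * (y : ℂ)⁻¹) * y = 0 := by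
          rw [show c - a * (y : ℂ)⁻¹ = 0 from by linear_combination h0, zero_mul]
        field_simp at h2
        linear_combination h2
      have hc : c ≠ 0 := by
        rintro rfl
        rw [zero_mul] at key
        apply hdet
        rw [← key]
        ring
      rw [mob_infty', if_neg hc, OnePoint.coe_eq_coe, div_eq_iff hc]
      linear_combination -key
    · simp only [mem_singleton_iff] at hX
      subst hX
      simp only [invC_infty, mul_zero, zero_mul, sub_zero, add_zero] at h0
      rw [mob_infty', if_pos h0]

lemma W_mem {ε : ℝ} (hε : ε ≤ 1/2) {T : ℂ} (hT : T ∈ Wset ε) :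
    ((T : ℂ) : OnePoint ℂ) ∈ KS ε ∧ T ≠ 0 := by
  rcases hT with ⟨hpos, hlt⟩ | ⟨x, hx, rfl⟩
  · refine ⟨Or.inl ⟨T, Or.inl ?_, rfl⟩, ?_⟩
    · rw [Metric.mem_closedBall, Complex.dist_eq]; exact hlt.le
    · rintro rfl
      simp only [zero_sub, norm_neg, norm_one] at hlt
      linarith
  · refine ⟨Or.inl ⟨x, Or.inr ⟨x, hx.le, rfl⟩, rfl⟩, ?_⟩
    simp only [ne_eq, Complex.ofReal_eq_zero]
    intro hh; rw [hh] at hx; linarith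

theorem stmt9 (a b c d : ℂ) (hdet : a * d - b * c ≠ 0)
    (hC : mob a b c d '' raySet ∩ raySet ⊆ Vset a b c d)
    (N : Set (OnePoint ℂ × OnePoint ℂ)) (hN : IsOpen N)
    (hNmem : ∀ X₀ ∈ Vset a b c d, (mob d (-b) (-c) a X₀, X₀) ∈ N) :
    ∃ ε > (0 : ℝ), ∃ M > (0 : ℝ), ∀ T X : ℂ, T ∈ Wset ε → X ∈ Wset ε →
      ((T : OnePoint ℂ), (X : OnePoint ℂ)) ∉ N →
      c * T + d ≠ 0 → (a * T + b) / (c * T + d) ≠ X →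
      ‖(1 / (c * T + d)) * (1 / (1 - ((a * T + b) / (c * T + d)) / X))‖
        ≤ M / ‖T‖ := by
  classical
  set e : ℕ → ℝ := fun n => (1/2) / (n + 1) with he
  have hepos : ∀ n : ℕ, 0 < e n := fun n => by positivity
  have hele : ∀ n : ℕ, e n ≤ 1/2 := by
    intro n
    rw [he]
    simp only
    rw [div_le_iff₀ (by positivity)]
    nlinarith [Nat.cast_nonneg (α := ℝ) n]
  have hed : ∀ n : ℕ, e (n + 1) ≤ e n := by
    intro n
    rw [he]
    simp only
    gcongr
    push_cast
    linarith
  -- continuity of phiF on the big compact set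
  have hContOn : ∀ ε ≤ (1 : ℝ)/2, ContinuousOn (phiF a b c d) (KS ε ×ˢ KS ε) := by
    intro ε hε p hp
    exact (contAt_phiF a b c d (ne_zero_of_mem_KS hε hp.1) (ne_zero_of_mem_KS hε hp.2)).continuousWithinAt
  -- Z' : the zero set of phiF within the big compact set; it is closed
  set Z' : Set (OnePoint ℂ × OnePoint ℂ) :=
    (KS (1/2) ×ˢ KS (1/2)) ∩ (phiF a b c d) ⁻¹' {0} with hZ'
  have hZ'closed : IsClosed Z' :=
    (hContOn (1/2) le_rfl).preimage_isClosed_of_isClosed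
      ((isClosed_KS _).prod (isClosed_KS _)) isClosed_singleton
  -- the shrinking family of compact sets
  set C : ℕ → Set (OnePoint ℂ × OnePoint ℂ) :=
    fun n => ((KS (e n) ×ˢ KS (e n)) ∩ Nᶜ) ∩ Z' with hCdef
  have hCclosed : ∀ n, IsClosed (C n) := fun n =>
    (((isClosed_KS _).prod (isClosed_KS _)).inter hN.isClosed_compl).inter hZ'closed
  have hCsub : ∀ n, C (n + 1) ⊆ C n := by
    intro n
    apply inter_subset_inter _ subset_rfl
    apply inter_subset_inter _ subset_rfl
    exact prod_mono (KS_mono (hed n)) (KS_mono (hed n))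
  have hC0 : IsCompact (C 0) :=
    IsCompact.of_isClosed_subset ((isCompact_KS (e 0)).prod (isCompact_KS (e 0)))
      (hCclosed 0) (fun p hp => hp.1.1)
  -- the intersection of the family is empty
  have hInter : (⋂ n, C n) = ∅ := by
    rw [eq_empty_iff_forall_notMem]
    intro p hp
    simp only [mem_iInter] at hp
    have hT : p.1 ∈ raySet := mem_iInter_KS (fun n => (hp n).1.1.1)
    have hX : p.2 ∈ raySet := mem_iInter_KS (fun n => (hp n).1.1.2)
    have hphi0 : phiF a b c d (p.1, p.2) = 0 := by
      have := (hp 0).2.2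
      simpa using this
    have hmob : mob a b c d p.1 = p.2 := phi_zero hdet hT hX hphi0
    have hXV : p.2 ∈ Vset a b c d := hC ⟨⟨p.1, hT, hmob⟩, hX⟩
    have hback : mob d (-b) (-c) a p.2 = p.1 := mob_inv hdet hmob
    have hpN : p ∈ N := by
      have := hNmem p.2 hXV
      rwa [hback, Prod.mk.eta] at this
    exact (hp 0).1.2 hpN
  -- some C n is empty
  have hex : ∃ n, C n = ∅ := by
    by_contra hcon
    push_neg at hcon
    have hne : ∀ n, (C n).Nonempty := hcon
    have := IsCompact.nonempty_iInter_of_sequence_nonempty_isCompact_isClosed C hCsub hne hC0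
      hCclosed
    rw [hInter] at this
    exact Set.not_nonempty_empty this
  obtain ⟨n, hCn⟩ := hex
  refine ⟨e n, hepos n, ?_⟩
  set ε := e n with hεdef
  set Cs : Set (OnePoint ℂ × OnePoint ℂ) := (KS ε ×ˢ KS ε) ∩ Nᶜ with hCs
  have hCscpt : IsCompact Cs :=
    IsCompact.of_isClosed_subset ((isCompact_KS ε).prod (isCompact_KS ε))
      (((isClosed_KS _).prod (isClosed_KS _)).inter hN.isClosed_compl) (fun p hp => hp.1)
  have hkey : ∀ p ∈ Cs, phiF a b c d p ≠ 0 := by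
    intro p hp h0
    have hpC : p ∈ C n := by
      refine ⟨hp, ⟨?_, h0⟩⟩
      exact ⟨KS_mono (hele n) hp.1.1, KS_mono (hele n) hp.1.2⟩
    rw [hCn] at hpC
    exact hpC
  -- main estimate, given a positive lower bound δ for phiF on Cs
  have main : ∀ δ > (0 : ℝ), (∀ p ∈ Cs, δ ≤ phiF a b c d p) →
      ∀ T X : ℂ, T ∈ Wset ε → X ∈ Wset ε →
      ((T : OnePoint ℂ), (X : OnePoint ℂ)) ∉ N →
      c * T + d ≠ 0 → (a * T + b) / (c * T + d) ≠ X →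
      ‖(1 / (c * T + d)) * (1 / (1 - ((a * T + b) / (c * T + d)) / X))‖
        ≤ (1/δ) / ‖T‖ := by
    intro δ hδ hmin T X hT hX hNn hden hneq
    obtain ⟨hTK, hT0⟩ := W_mem (hele n) hT
    obtain ⟨hXK, hX0⟩ := W_mem (hele n) hX
    have hmem : ((T : OnePoint ℂ), (X : OnePoint ℂ)) ∈ Cs := ⟨⟨hTK, hXK⟩, hNn⟩
    set D : ℂ := (c * T + d) * X - (a * T + b) with hD
    have hD0 : D ≠ 0 := by
      intro h
      apply hneq
      rw [div_eq_iff hden]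
      linear_combination -h
    have habsT : 0 < ‖T‖ := by
      exact norm_pos_iff.mpr hT0
    have habsX : 0 < ‖X‖ := by
      exact norm_pos_iff.mpr hX0
    have habsD : 0 < ‖D‖ := by
      exact norm_pos_iff.mpr hD0
    have hphi_eq : phiF a b c d ((T : OnePoint ℂ), (X : OnePoint ℂ))
        = ‖D‖ / (‖T‖ * ‖X‖) := by
      have hval : c + d * T⁻¹ - a * X⁻¹ - b * (T⁻¹ * X⁻¹) = D / (T * X) := by
        rw [hD]; field_simp; ring
      show ‖c + d * invC ((T : ℂ) : OnePoint ℂ) - a * invC ((X : ℂ) : OnePoint ℂ)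
        - b * (invC ((T : ℂ) : OnePoint ℂ) * invC ((X : ℂ) : OnePoint ℂ))‖ = _
      rw [invC_coe, invC_coe, hval, norm_div, norm_mul]
    have hbound : δ ≤ ‖D‖ / (‖T‖ * ‖X‖) := by
      rw [← hphi_eq]
      exact hmin _ hmem
    have h1 : δ * (‖T‖ * ‖X‖) ≤ ‖D‖ :=
      (le_div_iff₀ (by positivity)).mp hbound
    have hsub : (1 : ℂ) - ((a * T + b) / (c * T + d)) / X = D / ((c * T + d) * X) := by
      rw [hD, sub_div, div_self (mul_ne_zero hden hX0), div_div]
    have hLHS : (1 / (c * T + d)) * (1 / (1 - ((a * T + b) / (c * T + d)) / X)) = X / D := by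
      rw [hsub, one_div_div]
      field_simp
    rw [hLHS, norm_div]
    rw [div_le_div_iff₀ habsD habsT]
    have h2 : (1/δ) * (δ * (‖T‖ * ‖X‖))
        ≤ (1/δ) * ‖D‖ :=
      mul_le_mul_of_nonneg_left h1 (by positivity)
    have h3 : (1/δ) * (δ * (‖T‖ * ‖X‖))
        = ‖T‖ * ‖X‖ := by
      field_simp
    nlinarith [h2, h3]
  rcases Cs.eq_empty_or_nonempty with hemp | hnemp
  · refine ⟨1, one_pos, ?_⟩
    intro T X hT hX hNn hden hneq
    exfalso
    obtain ⟨hTK, hT0⟩ := W_mem (hele n) hT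
    obtain ⟨hXK, hX0⟩ := W_mem (hele n) hX
    have hmem : ((T : OnePoint ℂ), (X : OnePoint ℂ)) ∈ Cs := ⟨⟨hTK, hXK⟩, hNn⟩
    rw [hemp] at hmem
    exact hmem
  · obtain ⟨p₀, hp₀, hminOn⟩ := hCscpt.exists_isMinOn hnemp
      ((hContOn (1/2) le_rfl).mono
        (fun p hp => ⟨KS_mono (hele n) hp.1.1, KS_mono (hele n) hp.1.2⟩))
    set δ := phiF a b c d p₀ with hδdef
    have hδpos : 0 < δ :=
      lt_of_le_of_ne (norm_nonneg _) (Ne.symm (hkey p₀ hp₀))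
    refine ⟨1/δ, by positivity, ?_⟩
    exact main δ hδpos (fun p hp => hminOn hp)
end

section
/- Let g = [[a,b],[c,d]] ∈ GL₂(ℂ) and let T, X ∈ ℂ ∖ {0} satisfy j_D(g,T) ≠ 0, j_N(g,T) ≠ 0, j_D(g^{−1},X) ≠ 0, j_N(g^{−1},X) ≠ 0 and gT ≠ X. Set F_D = 1/(1 − (gT)/X), G_D = 1/(1 − (g^{−1}X)/T), F_N = ((gT)/X)/(1 − (gT)/X) and G_N = ((g^{−1}X)/T)/(1 − (g^{−1}X)/T). Then the following three identities hold: (T/j_D(g,T))·F_D = −(1/det g)·(X/j_D(g^{−1},X))·G_D; (1/j_N(g,T))·F_N = −(1/det g)·(1/j_N(g^{−1},X))·G_N; and (1/j_D(g,T))·F_D = −(1/det g)·(X/j_N(g^{−1},X))·G_N. -/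
/-- `j_D(g,z) = cz + d` for `g = [[a,b],[c,d]]`. -/
def jD (g : Matrix (Fin 2) (Fin 2) ℂ) (z : ℂ) : ℂ := g 1 0 * z + g 1 1

/-- `j_N(g,z) = az + b` for `g = [[a,b],[c,d]]`. -/
def jN (g : Matrix (Fin 2) (Fin 2) ℂ) (z : ℂ) : ℂ := g 0 0 * z + g 0 1

/-- The Möbius action `gz = (az+b)/(cz+d)`. -/
noncomputable def act (g : Matrix (Fin 2) (Fin 2) ℂ) (z : ℂ) : ℂ := jN g z / jD g z

theorem stmt10 (g : Matrix (Fin 2) (Fin 2) ℂ) (hdet : g.det ≠ 0) (T X : ℂ)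
    (hT : T ≠ 0) (hX : X ≠ 0)
    (h1 : jD g T ≠ 0) (h2 : jN g T ≠ 0) (h3 : jD g⁻¹ X ≠ 0) (h4 : jN g⁻¹ X ≠ 0)
    (h5 : act g T ≠ X) :
    (T / jD g T) * (1 / (1 - act g T / X)) =
        -(1 / g.det) * ((X / jD g⁻¹ X) * (1 / (1 - act g⁻¹ X / T))) ∧
      (1 / jN g T) * ((act g T / X) / (1 - act g T / X)) =
        -(1 / g.det) * ((1 / jN g⁻¹ X) * ((act g⁻¹ X / T) / (1 - act g⁻¹ X / T))) ∧
      (1 / jD g T) * (1 / (1 - act g T / X)) =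
        -(1 / g.det) * ((X / jN g⁻¹ X) * ((act g⁻¹ X / T) / (1 - act g⁻¹ X / T))) := by
  set a := g 0 0 with ha
  set b := g 0 1 with hb
  set c := g 1 0 with hc
  set d := g 1 1 with hd
  have eN : jN g T = a * T + b := rfl
  have eD : jD g T = c * T + d := rfl
  have hdet2 : g.det = a * d - b * c := Matrix.det_fin_two g
  have hdetA : a * d - b * c ≠ 0 := hdet2 ▸ hdet
  have h1' : c * T + d ≠ 0 := eD ▸ h1
  have h2' : a * T + b ≠ 0 := eN ▸ h2
  have hinv : g⁻¹ = (g.det)⁻¹ • !![d, -b; -c, a] := by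
    rw [Matrix.inv_def, Ring.inverse_eq_inv']
    congr 1
    rw [Matrix.eta_fin_two g, Matrix.adjugate_fin_two]
    simp
    exact ⟨⟨rfl, rfl⟩, rfl, rfl⟩
  have e1 : jN g⁻¹ X = (d * X - b) / g.det := by
    rw [hinv]; simp [jN, Matrix.smul_apply]; ring
  have e2 : jD g⁻¹ X = (-(c * X) + a) / g.det := by
    rw [hinv]; simp [jD, Matrix.smul_apply]; ring
  have h6 : X * (c * T + d) - (a * T + b) ≠ 0 := by
    intro h
    apply h5
    rw [act, eq_comm, eq_div_iff h1, eN, eD]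
    linear_combination h
  have h3' : -(c * X) + a ≠ 0 := by
    intro h; apply h3; rw [e2, h, zero_div]
  have h4' : d * X - b ≠ 0 := by
    intro h; apply h4; rw [e1, h, zero_div]
  have hA : 1 - act g T / X = (X * (c * T + d) - (a * T + b)) / (X * (c * T + d)) := by
    rw [act, eN, eD]; field_simp [h1', hX, show T * c + d ≠ 0 by rwa [mul_comm]]
  have hactinv : act g⁻¹ X = (d * X - b) / (-(c * X) + a) := by
    rw [act, e1, e2, div_div_div_cancel_right₀]
    exact hdet
  have hB : 1 - act g⁻¹ X / T = -(X * (c * T + d) - (a * T + b)) / (T * (-(c * X) + a)) := by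
    rw [hactinv]
    field_simp [h3', hT, show -(X * c) + a ≠ 0 by rwa [mul_comm]]
    ring
  have f1 : X / jD g⁻¹ X = X * g.det / (-(c * X) + a) := by
    rw [e2, div_div_eq_mul_div]
  have f2 : (1 : ℂ) / jN g⁻¹ X = g.det / (d * X - b) := by
    rw [e1, one_div, inv_div]
  have f3 : X / jN g⁻¹ X = X * g.det / (d * X - b) := by
    rw [e1, div_div_eq_mul_div]
  rw [hA, hB, hactinv, f1, f2, f3]
  simp only [act, eN, eD, hdet2]
  obtain ⟨K, hK⟩ : ∃ K : ℂ, K = X * (c * T + d) - (a * T + b) := ⟨_, rfl⟩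
  rw [← hK] at h6 ⊢
  have r : (d * X - b) / (-(c * X) + a) / T / (-K / (T * (-(c * X) + a))) =
      -((d * X - b) / K) := by
    field_simp [h3', h6, hT, h4', show -(X * c) + a ≠ 0 by rwa [mul_comm]]
  rw [r]
  refine ⟨?_, ?_, ?_⟩ <;>
  · field_simp [h1', h2', h3', h4', h6, hT, hX, hdetA, show T * c + d ≠ 0 by rwa [mul_comm],
      show -(X * c) + a ≠ 0 by rwa [mul_comm], show d * a - c * b ≠ 0 by rwa [mul_comm d, mul_comm c],
      show -(c * b) + d * a ≠ 0 by rwa [mul_comm d, mul_comm c, neg_add_eq_sub]]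
end
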